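/- arXiv:0901.1937 — 12 statements merged into one kernel-verified Lean document; each statement's English description precedes it below -/
import Mathlib

section
/- Let x : ZMod r → ℕ → R be a tube system of rank r over a commutative ring R. Let i, j, k, l, m be integers with 1 ≤ j ≤ i ≤ r, m ≥ 0, 0 ≤ l ≤ r−1, 1 ≤ k ≤ mr+l and k+i ≥ r+j. Then, with the first argument of x taken as a residue modulo r, x i k · x j (mr+l) = x i ((m+1)r+l+j−i) · x j (k+i−r−j) + x i (r+j−i−1) · x (k+i+1) ((m+1)r+l+j−k−i−1). (This is case (1)(1) of Theorem 7.1: X_{E_i[k]} X_{E_j[mr+l]} = X_{E_i[(m+1)r+l+j−i]} X_{E_j[k+i−r−j]} + X_{E_i[r+j−i−1]} X_{E_{k+i+1}[(m+1)r+l+j−k−i−1]}.) -/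
/-- A tube system of rank `r` over a commutative ring `R`: `x i n` models the
generalized cluster variable `X_{E_i[n]}` of the indecomposable regular module
with quasi-socle `E_i` and quasi-length `n` in a tube of rank `r`, with the
convention `X_{E_i[0]} = 1`, together with the cluster multiplication
relations these variables satisfy. -/
def IsTubeSystem {R : Type*} [CommRing R] (r : ℕ) (x : ZMod r → ℕ → R) : Prop :=
  (∀ i, x i 0 = 1) ∧
  (∀ (i : ZMod r) (N : ℕ), 1 ≤ N →
    x (i + (N : ZMod r)) 1 * x i N = x i (N + 1) + x i (N - 1)) ∧
  (∀ (i : ZMod r) (N : ℕ), 1 ≤ N →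
    x (i - 1) 1 * x i N = x (i - 1) (N + 1) + x (i + 1) (N - 1))

section Aux
variable {R : Type*} [CommRing R] {r : ℕ} {x : ZMod r → ℕ → R}

private lemma tube_diag (hx : IsTubeSystem r x) (u : ℕ) :
    ∀ (i : ZMod r) (p : ℕ),
      x i (u+1) * x (i + (u:ZMod r) + 1) (p+1)
        = x i (p+u+2) + x i u * x (i + (u:ZMod r) + 2) p := by
  obtain ⟨h0, hb, hc⟩ := hx
  have hc' : ∀ (i : ZMod r) (N : ℕ), 1 ≤ N →
      x i 1 * x (i+1) N = x i (N+1) + x (i+1+1) (N-1) := by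
    intro i N hN
    have h := hc (i+1) N hN
    rwa [add_sub_cancel_right] at h
  induction u with
  | zero =>
    intro i p
    have h := hc' i (p+1) (by omega)
    simp only [Nat.add_sub_cancel] at h
    simp only [Nat.cast_zero, add_zero, h0, one_mul]
    rw [show p+1+1 = p+2 from by omega, show (i:ZMod r)+1+1 = i+2 from by ring] at h
    simpa using h
  | succ u ih =>
    intro i p
    rw [show ((u+1:ℕ) : ZMod r) = (u : ZMod r) + 1 from by push_cast; ring]
    have hb1 := hb i (u+1) (by omega)
    rw [show ((u+1:ℕ) : ZMod r) = (u : ZMod r) + 1 from by push_cast; ring,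
       ← add_assoc] at hb1
    simp only [Nat.add_sub_cancel] at hb1
    -- hb1 : x (i+u+1) 1 * x i (u+1) = x i (u+1+1) + x i u
    have hc1 := hc' (i + (u:ZMod r) + 1) (p+1) (by omega)
    simp only [Nat.add_sub_cancel] at hc1
    -- hc1 : x (i+u+1) 1 * x (i+u+1+1) (p+1) = x (i+u+1) (p+1+1) + x (i+u+1+1+1) p
    have ih1 := ih i (p+1)
    -- ih1 : x i (u+1) * x (i+u+1) (p+1+1) = x i (p+1+u+2) + x i u * x (i+u+2) (p+1)
    rw [show (i:ZMod r)+(u:ZMod r)+1+1 = i+u+2 from by ring,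
        show (i:ZMod r)+(u:ZMod r)+2+1 = i+u+3 from by ring,
        show p+1+1 = p+2 from by omega] at hc1
    rw [show p+1+u+2 = p+u+3 from by omega] at ih1
    rw [show u+1+1 = u+2 from by omega] at hb1
    rw [show (i:ZMod r)+((u:ZMod r)+1)+1 = i+u+2 from by ring,
        show (i:ZMod r)+((u:ZMod r)+1)+2 = i+u+3 from by ring,
        show p+(u+1)+2 = p+u+3 from by omega,
        show u+1+1 = u+2 from by omega]
    -- goal : x i (u+2) * x (i+u+2) (p+1) = x i (p+u+3) + x i (u+1) * x (i+u+3) p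
    have hih : x i (u+1) * x (i + (u:ZMod r) + 1) (p+2) = x i (p+u+3) + x i u * x (i+(u:ZMod r)+2) (p+1) := by
      rw [show p+2 = p+1+1 from by omega]; exact ih1
    linear_combination x i (u+1) * hc1 + hih - x (i+(u:ZMod r)+2) (p+1) * hb1

private lemma tube_L (hx : IsTubeSystem r x) (s : ℕ) :
    ∀ (u : ℕ) (i : ZMod r) (p : ℕ),
      x i (u+s+1) * x (i + (u:ZMod r) + 1) (s+p+1)
        = x i (s+p+u+2) * x (i + (u:ZMod r) + 1) s
          + x i u * x (i + (u:ZMod r) + (s:ZMod r) + 2) p := by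
  obtain ⟨h0, hb, hc⟩ := hx
  have hc' : ∀ (i : ZMod r) (N : ℕ), 1 ≤ N →
      x i 1 * x (i+1) N = x i (N+1) + x (i+1+1) (N-1) := by
    intro i N hN
    have h := hc (i+1) N hN
    rwa [add_sub_cancel_right] at h
  -- case s = 1
  have P1 : ∀ (u : ℕ) (i : ZMod r) (p : ℕ),
      x i (u+2) * x (i + (u:ZMod r) + 1) (p+2)
        = x i (p+u+3) * x (i + (u:ZMod r) + 1) 1 + x i u * x (i + (u:ZMod r) + 3) p := by
    intro u i p
    have hb1 := hb i (u+1) (by omega)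
    rw [show ((u+1:ℕ) : ZMod r) = (u : ZMod r) + 1 from by push_cast; ring, ← add_assoc] at hb1
    simp only [Nat.add_sub_cancel] at hb1
    rw [show u+1+1 = u+2 from by omega] at hb1
    have hd := tube_diag ⟨h0, hb, hc⟩ u i (p+1)
    rw [show p+1+1 = p+2 from by omega, show p+1+u+2 = p+u+3 from by omega] at hd
    have hc1 := hc' (i + (u:ZMod r) + 1) (p+1) (by omega)
    simp only [Nat.add_sub_cancel] at hc1
    rw [show p+1+1 = p+2 from by omega,
        show (i:ZMod r)+(u:ZMod r)+1+1 = i+u+2 from by ring,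
        show (i:ZMod r)+(u:ZMod r)+2+1 = i+u+3 from by ring] at hc1
    linear_combination x (i+(u:ZMod r)+1) 1 * hd + x i u * hc1
      - x (i+(u:ZMod r)+1) (p+2) * hb1
  -- two-step induction
  have key : ∀ s : ℕ,
      (∀ (u : ℕ) (i : ZMod r) (p : ℕ),
        x i (u+s+1) * x (i + (u:ZMod r) + 1) (s+p+1)
          = x i (s+p+u+2) * x (i + (u:ZMod r) + 1) s
            + x i u * x (i + (u:ZMod r) + (s:ZMod r) + 2) p) ∧
      (∀ (u : ℕ) (i : ZMod r) (p : ℕ),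
        x i (u+s+2) * x (i + (u:ZMod r) + 1) (s+p+2)
          = x i (s+p+u+3) * x (i + (u:ZMod r) + 1) (s+1)
            + x i u * x (i + (u:ZMod r) + (s:ZMod r) + 3) p) := by
    intro s
    induction s with
    | zero =>
      constructor
      · intro u i p
        simp only [Nat.cast_zero, add_zero, Nat.zero_add, h0, mul_one]
        exact tube_diag ⟨h0, hb, hc⟩ u i p
      · intro u i p
        simp only [Nat.cast_zero, add_zero, Nat.zero_add]
        exact P1 u i p
    | succ s ih =>
      have cast1 : ((s+1:ℕ) : ZMod r) = (s : ZMod r) + 1 := by push_cast; ring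
      constructor
      · intro u i p
        have h2 := ih.2 u i p
        rw [cast1]
        rw [show u+(s+1)+1 = u+s+2 from by omega, show (s+1)+p+1 = s+p+2 from by omega,
            show (s+1)+p+u+2 = s+p+u+3 from by omega,
            show (i:ZMod r)+(u:ZMod r)+((s:ZMod r)+1)+2 = i+u+s+3 from by ring]
        exact h2
      · intro u i p
        rw [cast1]
        rw [show u+(s+1)+2 = u+s+3 from by omega, show (s+1)+p+2 = s+p+3 from by omega,
            show (s+1)+p+u+3 = s+p+u+4 from by omega,
            show s+1+1 = s+2 from by omega,
            show (i:ZMod r)+(u:ZMod r)+((s:ZMod r)+1)+3 = i+u+s+4 from by ring]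
        -- goal : x i (u+s+3) * x (i+u+1) (s+p+3)
        --      = x i (s+p+u+4) * x (i+u+1) (s+2) + x i u * x (i+u+s+4) p
        have A := ih.2 u i (p+1)
        rw [show s+(p+1)+2 = s+p+3 from by omega,
            show s+(p+1)+u+3 = s+p+u+4 from by omega] at A
        have B := ih.1 u i (p+2)
        rw [show s+(p+2)+1 = s+p+3 from by omega,
            show s+(p+2)+u+2 = s+p+u+4 from by omega] at B
        have hb1 := hb i (u+s+2) (by omega)
        rw [show ((u+s+2:ℕ) : ZMod r) = (u : ZMod r) + (s : ZMod r) + 2 from by push_cast; ring,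
            show (i:ZMod r)+((u:ZMod r)+(s:ZMod r)+2) = i+u+s+2 from by ring] at hb1
        rw [show u+s+2+1 = u+s+3 from by omega,
            show u+s+2-1 = u+s+1 from by omega] at hb1
        have hb2 := hb (i + (u:ZMod r) + 1) (s+1) (by omega)
        rw [show (i:ZMod r)+(u:ZMod r)+1+((s+1:ℕ) : ZMod r) = i+u+s+2 from by push_cast; ring] at hb2
        simp only [Nat.add_sub_cancel] at hb2
        rw [show s+1+1 = s+2 from by omega] at hb2
        have hc1 := hc' (i + (u:ZMod r) + (s:ZMod r) + 2) (p+1) (by omega)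
        simp only [Nat.add_sub_cancel] at hc1
        rw [show p+1+1 = p+2 from by omega,
            show (i:ZMod r)+(u:ZMod r)+(s:ZMod r)+2+1 = i+u+s+3 from by ring,
            show (i:ZMod r)+(u:ZMod r)+(s:ZMod r)+3+1 = i+u+s+4 from by ring] at hc1
        linear_combination x (i+(u:ZMod r)+(s:ZMod r)+2) 1 * A
          - x (i+(u:ZMod r)+1) (s+p+3) * hb1
          + x i (s+p+u+4) * hb2 + x i u * hc1 - B
  exact (key s).1

end Aux


/-- Theorem 7.1, case (1)(1). -/
theorem tube_multiplication_case_1_1 {R : Type*} [CommRing R] (r : ℕ)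
    (x : ZMod r → ℕ → R) (hx : IsTubeSystem r x)
    (i j k l m : ℕ)
    (hj : 1 ≤ j) (hji : j ≤ i) (hir : i ≤ r) (hl : l ≤ r - 1)
    (hk1 : 1 ≤ k) (hk2 : k ≤ m * r + l) (hcase : r + j ≤ k + i) :
    x (i : ZMod r) k * x (j : ZMod r) (m * r + l)
      = x (i : ZMod r) ((m + 1) * r + l + j - i) * x (j : ZMod r) (k + i - r - j)
        + x (i : ZMod r) (r + j - i - 1)
          * x ((k + i + 1 : ℕ) : ZMod r) ((m + 1) * r + l + j - k - i - 1) := by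
  have hmr : (m+1)*r = m*r+r := by ring
  have L := tube_L hx (k+i-r-j) (r+j-i-1) ((i : ℕ) : ZMod r) ((m+1)*r+l+j-k-i-1)
  rw [show (r+j-i-1) + (k+i-r-j) + 1 = k from by omega,
      show (k+i-r-j) + ((m+1)*r+l+j-k-i-1) + 1 = m*r+l from by omega,
      show (k+i-r-j) + ((m+1)*r+l+j-k-i-1) + (r+j-i-1) + 2 = (m+1)*r+l+j-i from by omega]
    at L
  have e1 : ((i : ℕ) : ZMod r) + ((r+j-i-1 : ℕ) : ZMod r) + 1 = ((j : ℕ) : ZMod r) := by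
    have h : i + ((r+j-i-1) + 1) = r + j := by omega
    calc ((i : ℕ) : ZMod r) + ((r+j-i-1 : ℕ) : ZMod r) + 1
        = ((i + ((r+j-i-1) + 1) : ℕ) : ZMod r) := by push_cast; ring
      _ = ((r + j : ℕ) : ZMod r) := by rw [h]
      _ = ((j : ℕ) : ZMod r) := by push_cast; simp
  have e2 : ((i : ℕ) : ZMod r) + ((r+j-i-1 : ℕ) : ZMod r) + ((k+i-r-j : ℕ) : ZMod r) + 2
      = ((k + i + 1 : ℕ) : ZMod r) := by
    have h : i + ((r+j-i-1) + (k+i-r-j) + 2) = k + i + 1 := by omega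
    calc ((i : ℕ) : ZMod r) + ((r+j-i-1 : ℕ) : ZMod r) + ((k+i-r-j : ℕ) : ZMod r) + 2
        = ((i + ((r+j-i-1) + (k+i-r-j) + 2) : ℕ) : ZMod r) := by push_cast; ring
      _ = ((k + i + 1 : ℕ) : ZMod r) := by rw [h]
  rw [e1, e2] at L
  exact L
end

section
/- Let x : ZMod r → ℕ → R be a tube system of rank r over a commutative ring R. Let i, j, k, l, m be integers with 1 ≤ j ≤ i ≤ r, m ≥ 0, 0 ≤ l ≤ r−1, 1 ≤ k ≤ mr+l, k+i < r+j and i ≤ l+j ≤ k+i−1. Then, with the first argument of x taken as a residue modulo r, x i k · x j (mr+l) = x j (mr+k+i−j) · x i (l+j−i) + x j (mr+i−j−1) · x (l+j+1) (k+i−l−j−1). (This is case (1)(2) of Theorem 7.1: X_{E_i[k]} X_{E_j[mr+l]} = X_{E_j[mr+k+i−j]} X_{E_i[l+j−i]} + X_{E_j[mr+i−j−1]} X_{E_{l+j+1}[k+i−l−j−1]}.) -/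
section TubeAux
variable {R : Type*} [CommRing R] {r : ℕ}

/-- Generalized continuant. -/
def tubeCont (a : ZMod r → R) (p : ZMod r) : ℕ → R
  | 0 => 1
  | 1 => a p
  | (n+2) => a (p + ((n+1 : ℕ) : ZMod r)) * tubeCont a p (n+1) - tubeCont a p n

@[simp] lemma tubeCont_zero (a : ZMod r → R) (p : ZMod r) : tubeCont a p 0 = 1 := rfl
@[simp] lemma tubeCont_one (a : ZMod r → R) (p : ZMod r) : tubeCont a p 1 = a p := rfl
lemma tubeCont_rec (a : ZMod r → R) (p : ZMod r) (n : ℕ) :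
    tubeCont a p (n+2) = a (p + ((n+1 : ℕ) : ZMod r)) * tubeCont a p (n+1) - tubeCont a p n := rfl

/-- Casoratian/Wronskian identity for continuants. -/
lemma tubeCont_wron (a : ZMod r → R) : ∀ (u v : ℕ) (p : ZMod r),
    tubeCont a p (v+u+1) * tubeCont a (p + ((v+1 : ℕ) : ZMod r)) (u+1)
      - tubeCont a p (v+u+2) * tubeCont a (p + ((v+1 : ℕ) : ZMod r)) u
      = tubeCont a p v := by
  intro u
  induction u with
  | zero =>
    intro v p
    simp only [Nat.add_zero, Nat.zero_add, tubeCont_zero, tubeCont_one]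
    have h := tubeCont_rec a p v
    linear_combination -h
  | succ u ihu =>
    intro v p
    rw [show v+(u+1)+1 = v+u+2 from by omega, show u+1+1 = u+2 from by omega,
      show v+(u+1)+2 = v+u+3 from by omega]
    have h1 := tubeCont_rec a (p + ((v+1 : ℕ) : ZMod r)) u
    have e : p + ((v+1 : ℕ) : ZMod r) + ((u+1 : ℕ) : ZMod r)
        = p + ((v+u+2 : ℕ) : ZMod r) := by push_cast; ring
    rw [e] at h1
    have h2 := tubeCont_rec a p (v+u+1)
    rw [show v+u+1+2 = v+u+3 from by omega, show v+u+1+1 = v+u+2 from by omega] at h2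
    have h3 := ihu v p
    linear_combination h3 + tubeCont a p (v+u+2) * h1
      - tubeCont a (p + ((v+1 : ℕ) : ZMod r)) (u+1) * h2

variable (x : ZMod r → ℕ → R)

lemma tubeCont_eq (hx : IsTubeSystem r x) : ∀ (n : ℕ) (p : ZMod r),
    tubeCont (fun w => x w 1) p n = x p n := by
  intro n
  induction n using Nat.strong_induction_on with
  | _ n ih =>
    match n with
    | 0 => intro p; exact (hx.1 p).symm
    | 1 => intro p; rfl
    | (n+2) =>
      intro p
      have h := hx.2.1 p (n+1) (by omega)
      simp only [Nat.add_sub_cancel] at h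
      rw [tubeCont_rec, ih (n+1) (by omega), ih n (by omega)]
      linear_combination h

lemma tubeCont_left (hx : IsTubeSystem r x) (M : ℕ) (p : ZMod r) :
    tubeCont (fun w => x w 1) p (M+2)
      = x p 1 * tubeCont (fun w => x w 1) (p+1) (M+1)
        - tubeCont (fun w => x w 1) (p+2) M := by
  have h := hx.2.2 (p+1) (M+1) (by omega)
  simp only [add_sub_cancel_right, Nat.add_sub_cancel] at h
  rw [tubeCont_eq x hx, tubeCont_eq x hx, tubeCont_eq x hx]
  have e : p + 1 + 1 = p + 2 := by ring
  rw [← e]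
  linear_combination -h

/-- Gluing identity for continuants. -/
lemma tubeCont_glue (hx : IsTubeSystem r x) : ∀ (n : ℕ) (p : ZMod r) (q : ℕ),
    tubeCont (fun w => x w 1) p (n+q+2)
      = tubeCont (fun w => x w 1) p (n+1)
          * tubeCont (fun w => x w 1) (p + ((n+1 : ℕ) : ZMod r)) (q+1)
        - tubeCont (fun w => x w 1) p n
          * tubeCont (fun w => x w 1) (p + ((n+2 : ℕ) : ZMod r)) q := by
  intro n
  induction n using Nat.strong_induction_on with
  | _ n ih =>
    match n with
    | 0 =>
      intro p q
      simp only [Nat.zero_add, Nat.cast_one, Nat.cast_two, tubeCont_zero, tubeCont_one]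
      have h := tubeCont_left x hx q p
      linear_combination h
    | 1 =>
      intro p q
      rw [show 1+q+2 = q+1+2 from by omega, show (1:ℕ)+1 = 2 from rfl,
        show (1:ℕ)+2 = 3 from rfl, Nat.cast_two, Nat.cast_ofNat]
      simp only [tubeCont_one]
      have h1 := tubeCont_left x hx (q+1) p
      have h2 := tubeCont_left x hx q (p+1)
      have e2 : p + 1 + 1 = p + 2 := by ring
      have e3 : p + 1 + 2 = p + 3 := by ring
      rw [e2, e3] at h2
      have h3 := tubeCont_rec (fun w => x w 1) p 0
      rw [show (0:ℕ)+1 = 1 from rfl, Nat.cast_one] at h3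
      simp only [tubeCont_zero, tubeCont_one] at h3
      linear_combination h1 + x p 1 * h2
        - tubeCont (fun w => x w 1) (p+2) (q+1) * h3
    | (n+2) =>
      intro p q
      rw [show n+2+q+2 = n+q+2+2 from by omega, show n+2+1 = n+3 from by omega,
        show n+2+2 = n+4 from by omega]
      have h0 := tubeCont_left x hx (n+q+2) p
      have h1 := ih (n+1) (by omega) (p+1) q
      rw [show n+1+q+2 = n+q+2+1 from by omega, show n+1+1 = n+2 from by omega,
        show n+1+2 = n+3 from by omega] at h1
      have e1 : p + 1 + ((n+2 : ℕ) : ZMod r) = p + ((n+3 : ℕ) : ZMod r) := by push_cast; ring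
      have e2 : p + 1 + ((n+3 : ℕ) : ZMod r) = p + ((n+4 : ℕ) : ZMod r) := by push_cast; ring
      rw [e1, e2] at h1
      have h2 := ih n (by omega) (p+2) q
      have e3 : p + 2 + ((n+1 : ℕ) : ZMod r) = p + ((n+3 : ℕ) : ZMod r) := by push_cast; ring
      have e4 : p + 2 + ((n+2 : ℕ) : ZMod r) = p + ((n+4 : ℕ) : ZMod r) := by push_cast; ring
      rw [e3, e4] at h2
      have h3 := tubeCont_left x hx (n+1) p
      have h4 := tubeCont_left x hx n p
      linear_combination h0 + x p 1 * h1 - h2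
        - tubeCont (fun w => x w 1) (p + ((n+3 : ℕ) : ZMod r)) (q+1) * h3
        + tubeCont (fun w => x w 1) (p + ((n+4 : ℕ) : ZMod r)) q * h4

/-- Euler-type identity. -/
lemma tubeCont_main (hx : IsTubeSystem r x) (s t q : ℕ) (p : ZMod r) :
    tubeCont (fun w => x w 1) (p + ((s+1 : ℕ) : ZMod r)) (t+q+1)
        * tubeCont (fun w => x w 1) p (s+t+1)
      = tubeCont (fun w => x w 1) p (s+t+q+2)
          * tubeCont (fun w => x w 1) (p + ((s+1 : ℕ) : ZMod r)) t
        + tubeCont (fun w => x w 1) p s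
          * tubeCont (fun w => x w 1) (p + ((s+t+2 : ℕ) : ZMod r)) q := by
  rcases Nat.eq_zero_or_pos t with rfl | ht
  · simp only [Nat.add_zero, Nat.zero_add, tubeCont_zero, mul_one]
    have h := tubeCont_glue x hx s p q
    linear_combination -h
  · obtain ⟨u, rfl⟩ : ∃ u, t = u + 1 := ⟨t-1, by omega⟩
    rw [show u+1+q+1 = u+q+2 from by omega, show s+(u+1)+1 = s+u+2 from by omega,
      show s+(u+1)+q+2 = s+u+q+3 from by omega, show s+(u+1)+2 = s+u+3 from by omega]
    have h1 := tubeCont_glue x hx (s+u+1) p q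
    rw [show s+u+1+q+2 = s+u+q+3 from by omega, show s+u+1+1 = s+u+2 from by omega,
      show s+u+1+2 = s+u+3 from by omega] at h1
    have h2 := tubeCont_glue x hx u (p + ((s+1 : ℕ) : ZMod r)) q
    have e1 : p + ((s+1 : ℕ) : ZMod r) + ((u+1 : ℕ) : ZMod r)
        = p + ((s+u+2 : ℕ) : ZMod r) := by push_cast; ring
    have e2 : p + ((s+1 : ℕ) : ZMod r) + ((u+2 : ℕ) : ZMod r)
        = p + ((s+u+3 : ℕ) : ZMod r) := by push_cast; ring
    rw [e1, e2] at h2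
    have h3 := tubeCont_wron (fun w => x w 1) u s p
    linear_combination tubeCont (fun w => x w 1) p (s+u+2) * h2
      - tubeCont (fun w => x w 1) (p + ((s+1 : ℕ) : ZMod r)) (u+1) * h1
      + tubeCont (fun w => x w 1) (p + ((s+u+3 : ℕ) : ZMod r)) q * h3

end TubeAux

/-- Theorem 7.1, case (1)(2). -/
theorem tube_multiplication_case_1_2 {R : Type*} [CommRing R] (r : ℕ)
    (x : ZMod r → ℕ → R) (hx : IsTubeSystem r x)
    (i j k l m : ℕ)
    (hj : 1 ≤ j) (hji : j ≤ i) (hir : i ≤ r) (hl : l ≤ r - 1)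
    (hk1 : 1 ≤ k) (hk2 : k ≤ m * r + l)
    (hcase : k + i < r + j) (hlj1 : i ≤ l + j) (hlj2 : l + j ≤ k + i - 1) :
    x (i : ZMod r) k * x (j : ZMod r) (m * r + l)
      = x (j : ZMod r) (m * r + k + i - j) * x (i : ZMod r) (l + j - i)
        + x (j : ZMod r) (m * r + i - j - 1)
          * x ((l + j + 1 : ℕ) : ZMod r) (k + i - l - j - 1) := by
  have hrm : j + 1 ≤ m * r + i := by
    rcases Nat.eq_zero_or_pos m with rfl | hm
    · simp only [Nat.zero_mul, Nat.zero_add] at hk2 ⊢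
      omega
    · have : r ≤ m * r := Nat.le_mul_of_pos_left r hm
      omega
  obtain ⟨s, hs⟩ : ∃ s, m * r + i = j + 1 + s := ⟨m * r + i - (j + 1), by omega⟩
  obtain ⟨t, htv⟩ : ∃ t, l + j = i + t := ⟨l + j - i, by omega⟩
  obtain ⟨q, hqv⟩ : ∃ q, k + i = l + j + 1 + q := ⟨k + i - (l + j + 1), by omega⟩
  rw [show m*r+k+i-j = s+t+q+2 from by omega, show m*r+i-j-1 = s from by omega,
    show k+i-l-j-1 = q from by omega, show m*r+l = s+t+1 from by omega,
    show l+j-i = t from by omega, show l+j+1 = i+t+1 from by omega,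
    show k = t+q+1 from by omega]
  have hz : (i : ZMod r) = (j : ZMod r) + ((s+1 : ℕ) : ZMod r) := by
    have h := congrArg (Nat.cast : ℕ → ZMod r) hs
    push_cast at h ⊢
    rw [ZMod.natCast_self] at h
    linear_combination h
  have hz2 : ((i+t+1 : ℕ) : ZMod r) = (j : ZMod r) + ((s+t+2 : ℕ) : ZMod r) := by
    push_cast at hz ⊢
    linear_combination hz
  rw [hz, hz2]
  have := tubeCont_main x hx s t q (j : ZMod r)
  simp only [tubeCont_eq x hx] at this
  exact this
end

section
/- Let x : ZMod r → ℕ → R be a tube system of rank r over a commutative ring R. Let i, j, k, l, m be integers with 1 ≤ i < j ≤ r, m ≥ 0, 0 ≤ l ≤ r−1, 1 ≤ k ≤ mr+l and k ≥ j−i. Then, with the first argument of x taken as a residue modulo r, x i k · x j (mr+l) = x i (j−i−1) · x (k+i+1) (mr+l+j−k−i−1) + x i (mr+l+j−i) · x j (k+i−j). (This is case (2)(1) of Theorem 7.1: X_{E_i[k]} X_{E_j[mr+l]} = X_{E_i[j−i−1]} X_{E_{k+i+1}[mr+l+j−k−i−1]} + X_{E_i[mr+l+j−i]} X_{E_j[k+i−j]}.)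 -/
namespace TubeAux

variable {R : Type*} [CommRing R] {r : ℕ}

/-- Extension of `x` to integer quasi-lengths, with `Y = 0` for negative lengths. -/
def Y (x : ZMod r → ℕ → R) (i : ZMod r) (n : ℤ) : R :=
  if 0 ≤ n then x i n.toNat else 0

variable {x : ZMod r → ℕ → R}

lemma Y_natCast (i : ZMod r) (n : ℕ) : Y x i (n : ℤ) = x i n := by
  simp [Y]

lemma Y_neg (i : ZMod r) {n : ℤ} (h : n < 0) : Y x i n = 0 := by
  simp [Y, not_le.mpr h]

lemma Y_zero (hx : IsTubeSystem r x) (i : ZMod r) : Y x i 0 = 1 := by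
  simpa [Y] using hx.1 i

lemma rel2 (hx : IsTubeSystem r x) (i b : ZMod r) (N P M : ℤ) (hN : 0 ≤ N)
    (hb : b = i + (N : ZMod r)) (hP : P = N + 1) (hM : M = N - 1) :
    Y x b 1 * Y x i N = Y x i P + Y x i M := by
  subst hb hP hM
  obtain ⟨n, rfl⟩ := Int.eq_ofNat_of_zero_le hN
  rcases Nat.eq_zero_or_pos n with rfl | hn
  · simp only [Nat.cast_zero, Int.cast_zero, add_zero, zero_add, zero_sub]
    rw [Y_zero hx, Y_neg i (show (-1:ℤ) < 0 by norm_num)]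
    ring
  · have h := hx.2.1 i n hn
    have e1 : ((n:ℤ)) + 1 = ((n+1 : ℕ) : ℤ) := by push_cast; ring
    have e2 : ((n:ℤ)) - 1 = ((n-1 : ℕ) : ℤ) := by omega
    rw [e1, e2, show (((n:ℤ)) : ZMod r) = ((n:ℕ) : ZMod r) by push_cast; ring]
    rw [show (1:ℤ) = ((1:ℕ):ℤ) by norm_num]
    rw [Y_natCast, Y_natCast, Y_natCast, Y_natCast]
    exact h

lemma rel3 (hx : IsTubeSystem r x) (i b c : ZMod r) (N P M : ℤ) (hN : 0 ≤ N)
    (hb : b = i - 1) (hc : c = i + 1) (hP : P = N + 1) (hM : M = N - 1) :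
    Y x b 1 * Y x i N = Y x b P + Y x c M := by
  subst hb hc hP hM
  obtain ⟨n, rfl⟩ := Int.eq_ofNat_of_zero_le hN
  rcases Nat.eq_zero_or_pos n with rfl | hn
  · simp only [Nat.cast_zero, zero_add, zero_sub]
    rw [Y_zero hx, Y_neg (i+1) (show (-1:ℤ) < 0 by norm_num)]
    ring
  · have h := hx.2.2 i n hn
    have e1 : ((n:ℤ)) + 1 = ((n+1 : ℕ) : ℤ) := by push_cast; ring
    have e2 : ((n:ℤ)) - 1 = ((n-1 : ℕ) : ℤ) := by omega
    rw [e1, e2, show (1:ℤ) = ((1:ℕ):ℤ) by norm_num]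
    rw [Y_natCast, Y_natCast, Y_natCast, Y_natCast]
    exact h

end TubeAux

namespace TubeAux
variable {R : Type*} [CommRing R] {r : ℕ} {x : ZMod r → ℕ → R}

lemma L1 (hx : IsTubeSystem r x) (k : ℕ) : ∀ (n : ℕ) (a : ZMod r), k ≤ n → 1 ≤ n →
    Y x a (k:ℤ) * Y x (a + 1) (n:ℤ)
      = Y x (a + (k:ZMod r) + 1) ((n:ℤ) - k)
        + Y x a ((n:ℤ) + 1) * Y x (a + 1) ((k:ℤ) - 1) := by
  induction k using Nat.strong_induction_on with
  | _ k ih =>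
  match k with
  | 0 =>
    intro n a _ _
    simp only [Nat.cast_zero, add_zero, sub_zero, zero_sub]
    rw [Y_zero hx, Y_neg (a+1) (show (-1:ℤ) < 0 by norm_num)]
    ring
  | 1 =>
    intro n a hkn hn
    have h := rel3 hx (a+1) a (a+1+1) (n:ℤ) ((n:ℤ)+1) ((n:ℤ)-1)
      (by positivity) (by ring) rfl rfl rfl
    simp only [Nat.cast_one]
    rw [show (1:ℤ)-1 = 0 by ring, Y_zero hx]
    linear_combination h
  | (k+2) =>
    intro n a hkn hn
    have hk1n : (k+1:ℕ) ≤ n := by omega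
    have h1 := rel2 hx a (a + (k:ZMod r) + 1) ((k:ℤ)+1) ((k:ℤ)+2) (k:ℤ)
      (by positivity) (by push_cast; ring) (by ring) (by ring)
    have h2 := ih (k+1) (by omega) n a hk1n hn
    have h3 := ih k (by omega) n a (by omega) hn
    have h4 := rel3 hx (a + (k:ZMod r) + 1 + 1) (a + (k:ZMod r) + 1) (a + (k:ZMod r) + 1 + 1 + 1)
      ((n:ℤ) - k - 1) ((n:ℤ) - k) ((n:ℤ) - k - 2)
      (by omega) (by ring) rfl (by ring) (by ring)
    have h5 := rel2 hx (a+1) (a + (k:ZMod r) + 1) (k:ℤ) ((k:ℤ)+1) ((k:ℤ)-1)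
      (by positivity) (by push_cast; ring) rfl rfl
    push_cast at h1 h2 h3 h4 h5 ⊢
    ring_nf at h1 h2 h3 h4 h5 ⊢
    linear_combination (-(Y x (1+a) (n:ℤ))) * h1 + (Y x (1 + a + (k:ZMod r)) 1) * h2 - h3 + h4
      + (Y x a (1+(n:ℤ))) * h5

end TubeAux

namespace TubeAux
variable {R : Type*} [CommRing R] {r : ℕ} {x : ZMod r → ℕ → R}

lemma main (hx : IsTubeSystem r x) (s : ℕ) : ∀ (k n : ℕ) (a : ZMod r), s ≤ k → k ≤ n → 1 ≤ n →
    Y x a (k:ℤ) * Y x (a + (s:ZMod r)) (n:ℤ)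
      = Y x a ((s:ℤ) - 1) * Y x (a + (k:ZMod r) + 1) ((n:ℤ) + s - k - 1)
        + Y x a ((n:ℤ) + s) * Y x (a + (s:ZMod r)) ((k:ℤ) - s) := by
  induction s using Nat.strong_induction_on with
  | _ s ih =>
  match s with
  | 0 =>
    intro k n a _ hkn hn
    simp only [Nat.cast_zero, add_zero, zero_sub, sub_zero]
    rw [Y_neg a (show (-1:ℤ) < 0 by norm_num)]
    ring
  | 1 =>
    intro k n a hsk hkn hn
    have h := L1 hx k n a hkn hn
    simp only [Nat.cast_one]
    rw [show (1:ℤ)-1 = 0 by ring, Y_zero hx, show (n:ℤ)+1-k-1 = (n:ℤ)-k by ring]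
    linear_combination h
  | (s+2) =>
    intro k n a hsk hkn hn
    have h1 := ih (s+1) (by omega) k (n+1) a (by omega) (by omega) (by omega)
    have h2 := ih s (by omega) k (n+2) a (by omega) (by omega) (by omega)
    have h3 := rel3 hx (a + (s:ZMod r) + 1) (a + (s:ZMod r)) (a + (s:ZMod r) + 1 + 1)
      ((n:ℤ)+1) ((n:ℤ)+2) (n:ℤ) (by positivity) (by ring) rfl (by ring) (by ring)
    have h4 := rel2 hx a (a + (s:ZMod r)) (s:ℤ) ((s:ℤ)+1) ((s:ℤ)-1)
      (by positivity) (by push_cast; ring) rfl rfl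
    have h5 := rel3 hx (a + (s:ZMod r) + 1) (a + (s:ZMod r)) (a + (s:ZMod r) + 1 + 1)
      ((k:ℤ)-s-1) ((k:ℤ)-s) ((k:ℤ)-s-2) (by omega) (by ring) rfl (by ring) (by ring)
    push_cast at h1 h2 h3 h4 h5 ⊢
    ring_nf at h1 h2 h3 h4 h5 ⊢
    linear_combination (-(Y x a (k:ℤ))) * h3 + (Y x (a + (s:ZMod r)) 1) * h1 - h2
      + (Y x (1 + a + (k:ZMod r)) (1 + (n:ℤ) + (s:ℤ) - (k:ℤ))) * h4 + (Y x a (2 + (n:ℤ) + s)) * h5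

end TubeAux

/-- Theorem 7.1, case (2)(1). -/
theorem tube_multiplication_case_2_1 {R : Type*} [CommRing R] (r : ℕ)
    (x : ZMod r → ℕ → R) (hx : IsTubeSystem r x)
    (i j k l m : ℕ)
    (hi : 1 ≤ i) (hij : i < j) (hjr : j ≤ r) (hl : l ≤ r - 1)
    (hk1 : 1 ≤ k) (hk2 : k ≤ m * r + l) (hcase : j - i ≤ k) :
    x (i : ZMod r) k * x (j : ZMod r) (m * r + l)
      = x (i : ZMod r) (j - i - 1)
          * x ((k + i + 1 : ℕ) : ZMod r) (m * r + l + j - k - i - 1)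
        + x (i : ZMod r) (m * r + l + j - i) * x (j : ZMod r) (k + i - j) := by
  have H := TubeAux.main hx (j-i) k (m*r+l) (i:ZMod r) hcase hk2 (le_trans hk1 hk2)
  rw [show ((i:ZMod r) + ((j-i : ℕ):ZMod r)) = (j:ZMod r) by
        rw [← Nat.cast_add]; congr 1; omega,
      show ((i:ZMod r) + ((k:ℕ):ZMod r) + 1) = ((k+i+1 : ℕ):ZMod r) by push_cast; ring,
      show ((j-i:ℕ):ℤ) - 1 = ((j-i-1:ℕ):ℤ) by omega,
      show ((m*r+l:ℕ):ℤ) + ((j-i:ℕ):ℤ) - (k:ℤ) - 1 = ((m*r+l+j-k-i-1:ℕ):ℤ) by omega,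
      show ((m*r+l:ℕ):ℤ) + ((j-i:ℕ):ℤ) = ((m*r+l+j-i:ℕ):ℤ) by omega,
      show ((k:ℕ):ℤ) - ((j-i:ℕ):ℤ) = ((k+i-j:ℕ):ℤ) by omega] at H
  simpa only [TubeAux.Y_natCast] using H
end

section
/- Let x : ZMod r → ℕ → R be a tube system of rank r over a commutative ring R. Let i, j, k, l, m be integers with 1 ≤ i < j ≤ r, m ≥ 0, 0 ≤ l ≤ r−1, 1 ≤ k ≤ mr+l, k < j−i and i ≤ l+j−r ≤ k+i−1. Then, with the first argument of x taken as a residue modulo r, x i k · x j (mr+l) = x j ((m+1)r+k+i−j) · x i (l+j−r−i) + x j ((m+1)r+i−j−1) · x (l+j+1) (k+r+i−l−j−1). (This is case (2)(2) of Theorem 7.1: X_{E_i[k]} X_{E_j[mr+l]} = X_{E_j[(m+1)r+k+i−j]} X_{E_i[l+j−r−i]} + X_{E_j[(m+1)r+i−j−1]} X_{E_{l+j+1}[k+r+i−l−j−1]}.) -/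
section TubeAux


variable {R : Type*} [CommRing R]

def cont (a : ℤ → R) : ℤ → ℕ → R
  | _, 0 => 1
  | t, 1 => a t
  | t, (n+2) => a (t + n + 1) * cont a t (n+1) - cont a t n

lemma cont_zero (a : ℤ → R) (t : ℤ) : cont a t 0 = 1 := rfl
lemma cont_one (a : ℤ → R) (t : ℤ) : cont a t 1 = a t := rfl
lemma cont_rec (a : ℤ → R) (t : ℤ) (n : ℕ) :
    cont a t (n+2) = a (t + n + 1) * cont a t (n+1) - cont a t n := rfl

lemma two_step {P : ℕ → Prop} (h0 : P 0) (h1 : P 1)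
    (hs : ∀ n, P n → P (n+1) → P (n+2)) : ∀ n, P n := by
  have key : ∀ n, P n ∧ P (n+1) := by
    intro n
    induction n with
    | zero => exact ⟨h0, h1⟩
    | succ k ih => exact ⟨ih.2, hs k ih.1 ih.2⟩
  exact fun n => (key n).1

/-- periodicity of continuants in the starting point -/
lemma cont_shift (a : ℤ → R) (r : ℕ) (hp : ∀ t, a (t + r) = a t) :
    ∀ n, ∀ t : ℤ, cont a (t + r) n = cont a t n := by
  refine two_step (fun t => rfl) (fun t => hp t) ?_
  intro n ih1 ih2 t
  rw [cont_rec, cont_rec, ih1, ih2]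
  have h : t + (r:ℤ) + n + 1 = (t + n + 1) + r := by ring
  rw [h, hp]

/-- the determinant identity -/
lemma cont_det (a : ℤ → R) (t : ℤ) :
    ∀ n, cont a t (n+1) * cont a (t+1) (n+1) - cont a t (n+2) * cont a (t+1) n = 1 := by
  intro n
  induction n with
  | zero =>
    rw [cont_rec, cont_one, cont_one, cont_zero, cont_zero]
    push_cast
    ring_nf
  | succ k ih =>
    rw [cont_rec a t (k+1), cont_rec a (t+1) k]
    have ha : (t + 1 + (k:ℤ) + 1) = t + ((k:ℤ) + 1) + 1 := by ring
    rw [ha]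
    push_cast
    linear_combination ih

/-- second component: `cB a t0 n = cont a (t0+1) (n-1)`, with value `0` at `n = 0`. -/
def cB (a : ℤ → R) (t0 : ℤ) : ℕ → R
  | 0 => 0
  | (n+1) => cont a (t0 + 1) n

lemma cB_zero (a : ℤ → R) (t0 : ℤ) : cB a t0 0 = 0 := rfl
lemma cB_succ (a : ℤ → R) (t0 : ℤ) (n : ℕ) : cB a t0 (n+1) = cont a (t0+1) n := rfl

lemma cB_rec (a : ℤ → R) (t0 : ℤ) (n : ℕ) :
    cB a t0 (n+2) = a (t0 + n + 1) * cB a t0 (n+1) - cB a t0 n := by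
  cases n with
  | zero =>
    rw [cB_succ, cB_succ, cB_zero, cont_one, cont_zero]
    push_cast
    ring_nf
  | succ k =>
    rw [cB_succ, cB_succ, cB_succ, cont_rec]
    have ha : (t0 + 1 + (k:ℤ) + 1) = t0 + ((k:ℤ) + 1) + 1 := by ring
    rw [ha]
    push_cast
    ring

/-- the "determinant" pairing of the vectors `(cont a t0 n, cB a t0 n)`. -/
def dd (a : ℤ → R) (t0 : ℤ) (n m : ℕ) : R :=
  cont a t0 n * cB a t0 m - cont a t0 m * cB a t0 n

lemma dd_one (a : ℤ → R) (t0 : ℤ) (n : ℕ) : dd a t0 n (n+1) = 1 := by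
  cases n with
  | zero =>
    simp [dd, cB_zero, cB_succ, cont_zero]
  | succ k =>
    show cont a t0 (k+1) * cont a (t0+1) (k+1) - cont a t0 (k+2) * cont a (t0+1) k = 1
    exact cont_det a t0 k

/-- the dictionary: `dd`-pairings of the vector sequence recover continuants. -/
lemma dd_dict (a : ℤ → R) (t0 : ℤ) (n : ℕ) :
    ∀ q, dd a t0 n (n+1+q) = cont a (t0 + 1 + n) q := by
  have base1 : dd a t0 n (n+1+1) = cont a (t0 + 1 + n) 1 := by
    unfold dd
    have h1 : n+1+1 = n+2 := rfl
    rw [h1, cB_rec, cont_rec, cont_one]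
    have hd := dd_one a t0 n
    unfold dd at hd
    have ha : (t0 + 1 + (n:ℤ)) = t0 + (n:ℤ) + 1 := by ring
    rw [ha]
    linear_combination a (t0 + (n:ℤ) + 1) * hd
  refine two_step ?_ base1 ?_
  · rw [cont_zero]; exact dd_one a t0 n
  · intro q ih1 ih2
    unfold dd at ih1 ih2 ⊢
    have h1 : n+1+(q+2) = (n+q+1)+2 := by omega
    have h2 : n+1+(q+1) = (n+q+1)+1 := by omega
    have h3 : n+1+q = n+q+1 := by omega
    rw [h1, cB_rec, cont_rec a t0 (n+q+1), cont_rec a (t0 + 1 + (n:ℤ)) q]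
    rw [h3] at ih1
    rw [h2] at ih2
    have ha : (t0 + 1 + (n:ℤ) + (q:ℤ) + 1) = t0 + ((n:ℤ) + (q:ℤ) + 1) + 1 := by ring
    rw [ha]
    push_cast at ih1 ih2 ⊢
    linear_combination (norm := ring_nf) a (t0 + (n:ℤ) + (q:ℤ) + 1 + 1) * ih2 - ih1

/-- monodromy: shifting the index by the period `r` acts linearly on the vector
sequence `n ↦ (cont a t0 n, cB a t0 n)`. -/
lemma mono (a : ℤ → R) (r : ℕ) (hp : ∀ t, a (t + r) = a t) (t0 : ℤ) :
    ∃ e11 e12 e21 e22 : R, ∀ n,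
      cont a t0 (n + r) = e11 * cont a t0 n + e12 * cB a t0 n ∧
      cB a t0 (n + r) = e21 * cont a t0 n + e22 * cB a t0 n := by
  refine ⟨cont a t0 r, cont a t0 (r+1) - a t0 * cont a t0 r,
          cB a t0 r, cB a t0 (r+1) - a t0 * cB a t0 r, ?_⟩
  refine two_step ?_ ?_ ?_
  · constructor
    · rw [Nat.zero_add, cont_zero, cB_zero]; ring
    · rw [Nat.zero_add, cont_zero, cB_zero]; ring
  · constructor
    · rw [Nat.add_comm 1 r]; simp only [cont_one, cB_succ, cont_zero, cB_zero]; ring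
    · rw [Nat.add_comm 1 r]; simp only [cont_one, cB_succ, cont_zero, cB_zero]; ring
  · intro n ih1 ih2
    have h1 : n + 2 + r = (n + r) + 2 := by omega
    have h2 : n + 1 + r = (n + r) + 1 := by omega
    rw [h2] at ih2
    have ha : (t0 + ((n:ℤ) + (r:ℕ)) + 1) = (t0 + (n:ℤ) + 1) + (r:ℕ) := by ring
    constructor
    · rw [h1, cont_rec a t0 (n+r), cont_rec a t0 n, cB_rec a t0 n]
      push_cast
      rw [ha, hp]
      linear_combination (norm := ring_nf) a (t0 + (n:ℤ) + 1) * ih2.1 - ih1.1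
    · rw [h1, cB_rec a t0 (n+r), cont_rec a t0 n, cB_rec a t0 n]
      push_cast
      rw [ha, hp]
      linear_combination (norm := ring_nf) a (t0 + (n:ℤ) + 1) * ih2.2 - ih1.2

/-- shift lemma: a linear relation among three vectors is preserved by shifting all
indices by a multiple of the period. -/
lemma shift (a : ℤ → R) (r : ℕ) (hp : ∀ t, a (t + r) = a t) (t0 : ℤ)
    (u v w : R) (x y z : ℕ)
    (hA : u * cont a t0 x + v * cont a t0 y + w * cont a t0 z = 0)
    (hB : u * cB a t0 x + v * cB a t0 y + w * cB a t0 z = 0) (s : ℕ) :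
    (u * cont a t0 (x + s*r) + v * cont a t0 (y + s*r) + w * cont a t0 (z + s*r) = 0) ∧
    (u * cB a t0 (x + s*r) + v * cB a t0 (y + s*r) + w * cB a t0 (z + s*r) = 0) := by
  induction s with
  | zero => simpa using ⟨hA, hB⟩
  | succ k ih =>
    obtain ⟨e11, e12, e21, e22, he⟩ := mono a r hp t0
    have hx : x + (k+1)*r = (x + k*r) + r := by ring
    have hy : y + (k+1)*r = (y + k*r) + r := by ring
    have hz : z + (k+1)*r = (z + k*r) + r := by ring
    rw [hx, hy, hz, (he _).1, (he _).1, (he _).1, (he _).2, (he _).2, (he _).2]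
    constructor
    · linear_combination e11 * ih.1 + e12 * ih.2
    · linear_combination e21 * ih.1 + e22 * ih.2

end TubeAux


/-- Theorem 7.1, case (2)(2). -/
theorem tube_multiplication_case_2_2 {R : Type*} [CommRing R] (r : ℕ)
    (x : ZMod r → ℕ → R) (hx : IsTubeSystem r x)
    (i j k l m : ℕ)
    (hi : 1 ≤ i) (hij : i < j) (hjr : j ≤ r) (hl : l ≤ r - 1)
    (hk1 : 1 ≤ k) (hk2 : k ≤ m * r + l)
    (hcase : k < j - i) (hlj1 : i ≤ l + j - r) (hlj2 : l + j - r ≤ k + i - 1) :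
    x (i : ZMod r) k * x (j : ZMod r) (m * r + l)
      = x (j : ZMod r) ((m + 1) * r + k + i - j) * x (i : ZMod r) (l + j - r - i)
        + x (j : ZMod r) ((m + 1) * r + i - j - 1)
          * x ((l + j + 1 : ℕ) : ZMod r) (k + r + i - l - j - 1) := by
  obtain ⟨hx1, hx2, hx3⟩ := hx
  set a : ℤ → R := fun t => x ((t : ℤ) : ZMod r) 1 with ha_def
  have hp : ∀ t : ℤ, a (t + (r:ℕ)) = a t := by
    intro t
    show x (((t + (r:ℕ) : ℤ)) : ZMod r) 1 = x ((t : ℤ) : ZMod r) 1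
    congr 1
    push_cast
    simp
  have key : ∀ (t : ℤ) (n : ℕ), x ((t : ℤ) : ZMod r) n = cont a t n := by
    intro t
    refine two_step (hx1 _) rfl ?_
    intro n ih1 ih2
    have hrel := hx2 ((t : ℤ) : ZMod r) (n+1) (by omega)
    rw [Nat.add_sub_cancel] at hrel
    have hc : ((t + (n:ℤ) + 1 : ℤ) : ZMod r) = ((t : ℤ) : ZMod r) + (((n+1 : ℕ)) : ZMod r) := by
      push_cast
      ring
    rw [cont_rec, ← ih1, ← ih2]
    show x _ (n+1+1) = a (t + (n:ℤ) + 1) * x ((t:ℤ) : ZMod r) (n+1) - x ((t:ℤ):ZMod r) n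
    rw [ha_def]
    simp only
    rw [hc]
    linear_combination -hrel
  have EX : ∀ (s n : ℕ), x ((s : ℕ) : ZMod r) n = cont a (s : ℤ) n := by
    intro s n
    have := key (s : ℤ) n
    rwa [Int.cast_natCast] at this
  set t0 : ℤ := (i : ℤ) - 1 with ht0
  have hmr : (m+1)*r = m*r + r := by ring
  rw [hmr]
  -- the six conversions
  have E1 : x ((i : ℕ) : ZMod r) k = dd a t0 0 (k+1) := by
    rw [EX i k]
    have hst : ((i:ℕ):ℤ) = t0 + 1 + ((0 : ℕ):ℤ) := by rw [ht0]; push_cast; ring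
    rw [hst, ← dd_dict]
    have hidx : 0+1+k = k+1 := by omega
    rw [hidx]
  have E2 : x ((j : ℕ) : ZMod r) (m*r+l)
      = dd a t0 (j-i) ((l+j-r+1-i) + (m*r+r)) := by
    rw [EX j (m*r+l)]
    have hst : ((j:ℕ):ℤ) = t0 + 1 + ((j-i : ℕ):ℤ) := by rw [ht0]; omega
    rw [hst, ← dd_dict]
    have hidx : (j-i)+1+(m*r+l) = (l+j-r+1-i) + (m*r+r) := by omega
    rw [hidx]
  have E3 : x ((j : ℕ) : ZMod r) (m*r+r+k+i-j)
      = dd a t0 (j-i) ((k+1) + (m*r+r)) := by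
    rw [EX j (m*r+r+k+i-j)]
    have hst : ((j:ℕ):ℤ) = t0 + 1 + ((j-i : ℕ):ℤ) := by rw [ht0]; omega
    rw [hst, ← dd_dict]
    have hidx : (j-i)+1+(m*r+r+k+i-j) = (k+1) + (m*r+r) := by omega
    rw [hidx]
  have E4 : x ((i : ℕ) : ZMod r) (l+j-r-i) = dd a t0 0 (l+j-r+1-i) := by
    rw [EX i (l+j-r-i)]
    have hst : ((i:ℕ):ℤ) = t0 + 1 + ((0 : ℕ):ℤ) := by rw [ht0]; push_cast; ring
    rw [hst, ← dd_dict]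
    have hidx : 0+1+(l+j-r-i) = (l+j-r+1-i) := by omega
    rw [hidx]
  have E5 : x ((j : ℕ) : ZMod r) (m*r+r+i-j-1)
      = dd a t0 (j-i) (0 + (m*r+r)) := by
    rw [EX j (m*r+r+i-j-1)]
    have hst : ((j:ℕ):ℤ) = t0 + 1 + ((j-i : ℕ):ℤ) := by rw [ht0]; omega
    rw [hst, ← dd_dict]
    have hidx : (j-i)+1+(m*r+r+i-j-1) = 0 + (m*r+r) := by omega
    rw [hidx]
  have E6 : x ((l+j+1 : ℕ) : ZMod r) (k+r+i-l-j-1) = dd a t0 (l+j-r+1-i) (k+1) := by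
    rw [EX (l+j+1) (k+r+i-l-j-1)]
    have hst : ((l+j+1:ℕ):ℤ) = t0 + 1 + (((l+j-r+1-i)+r : ℕ):ℤ) := by rw [ht0]; omega
    rw [hst, ← dd_dict]
    have hidx : ((l+j-r+1-i)+r)+1+(k+r+i-l-j-1) = ((k+1)+r) := by omega
    rw [hidx]
    -- now reduce dd a t0 (β+r) (γ+r) to dd a t0 β γ via periodicity
    have hq : (k+1)+r = ((l+j-r+1-i)+r) + 1 + (k+r+i-l-j-1) := by omega
    rw [hq, dd_dict]
    have hsh : t0 + 1 + (((l+j-r+1-i)+r : ℕ):ℤ) = (t0 + 1 + ((l+j-r+1-i : ℕ):ℤ)) + (r:ℕ) := by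
      push_cast; ring
    rw [hsh, cont_shift a r hp, ← dd_dict]
    have hidx2 : (l+j-r+1-i) + 1 + (k+r+i-l-j-1) = k+1 := by omega
    rw [hidx2]
  rw [E1, E2, E3, E4, E5, E6]
  -- Pluecker relation and shifting
  have hA : (dd a t0 (l+j-r+1-i) (k+1)) * cont a t0 0
        + (- dd a t0 0 (k+1)) * cont a t0 (l+j-r+1-i)
        + (dd a t0 0 (l+j-r+1-i)) * cont a t0 (k+1) = 0 := by
    unfold dd; ring
  have hB : (dd a t0 (l+j-r+1-i) (k+1)) * cB a t0 0
        + (- dd a t0 0 (k+1)) * cB a t0 (l+j-r+1-i)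
        + (dd a t0 0 (l+j-r+1-i)) * cB a t0 (k+1) = 0 := by
    unfold dd; ring
  obtain ⟨SA, SB⟩ := shift a r hp t0 _ _ _ 0 (l+j-r+1-i) (k+1) hA hB (m+1)
  rw [hmr] at SA SB
  unfold dd at SA SB ⊢
  linear_combination (norm := ring_nf) (cB a t0 (j-i)) * SA - (cont a t0 (j-i)) * SB
end

section
/- Let x : ZMod 3 → ℕ → R be a tube system of rank 3 over a commutative ring R, and let m ≥ 0 and n ≥ 3m+1 be integers. Then x 2 (3m+1) · x 1 n = ∑_{t=0}^{2m} c_t, where c_t = x 2 1 · x 1 (n+3m−3t) if t is even and c_t = x 1 (n+3m−3t) if t is odd. (This is Proposition 7.2(1): X_{E_2[3m+1]} X_{E_1[n]} = X_{E_2} X_{E_1[n+3m]} + X_{E_1[n+3m−3]} + X_{E_2} X_{E_1[n+3m−6]} + X_{E_1[n+3m−9]} + ⋯ + X_{E_2} X_{E_1[n−3m+6]} + X_{E_1[n−3m+3]} + X_{E_2} X_{E_1[n−3m]}.) -/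
namespace TubeAux3

variable {R : Type*} [CommRing R] (x : ZMod 3 → ℕ → R)

/-- Partial sum `U m p = ∑_{t=0}^{m} u_{p+6t}` where `u k = x 1 k`. -/
def Us (m p : ℕ) : R := ∑ t ∈ Finset.range (m + 1), x 1 (p + 6 * t)

/-- Partial sum `W m p = ∑_{t=0}^{m-1} u_{p+3+6t}`. -/
def Ws (m p : ℕ) : R := ∑ t ∈ Finset.range m, x 1 (p + 3 + 6 * t)

lemma Us_succ (m p : ℕ) : Us x (m + 1) p = Us x m p + x 1 (p + 6 * (m + 1)) :=
  Finset.sum_range_succ _ _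

lemma Ws_succ (m p : ℕ) : Ws x (m + 1) p = Ws x m p + x 1 (p + 3 + 6 * m) :=
  Finset.sum_range_succ _ _

lemma Ws_eq (m p : ℕ) : Ws x (m + 1) p = Us x m (p + 3) := rfl

lemma ustep (hx : IsTubeSystem 3 x) (k : ℕ) :
    x (1 + ((k + 1 : ℕ) : ZMod 3)) 1 * x 1 (k + 1) = x 1 (k + 2) + x 1 k := by
  have h := hx.2.1 1 (k + 1) (by omega)
  rw [show k + 1 + 1 = k + 2 by omega, show k + 1 - 1 = k by omega] at h
  exact h

lemma castP (a b : ℕ) (h : a = b + 3) : ((a : ℕ) : ZMod 3) = ((b : ℕ) : ZMod 3) := by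
  subst h
  rw [Nat.cast_add, ZMod.natCast_self, add_zero]

lemma lem3base (hx : IsTubeSystem 3 x) :
    ((x 1 1 * x 2 1 * x 0 1 - x 1 1 - x 2 1 - x 0 1) * x 1 3 = x 1 6 + x 1 0) ∧
    ((x 1 1 * x 2 1 * x 0 1 - x 1 1 - x 2 1 - x 0 1) * x 1 4 = x 1 7 + x 1 1) := by
  have h0 : x 1 0 = 1 := hx.1 1
  have s1 : x 2 1 * x 1 1 = x 1 2 + x 1 0 := by
    have h := hx.2.1 1 1 le_rfl
    rw [show ((1 : ZMod 3) + ((1 : ℕ) : ZMod 3)) = 2 by decide] at h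
    norm_num at h
    exact h
  have s2 : x 0 1 * x 1 2 = x 1 3 + x 1 1 := by
    have h := hx.2.1 1 2 (by omega)
    rw [show ((1 : ZMod 3) + ((2 : ℕ) : ZMod 3)) = 0 by decide] at h
    norm_num at h
    exact h
  have s3 : x 1 1 * x 1 3 = x 1 4 + x 1 2 := by
    have h := hx.2.1 1 3 (by omega)
    rw [show ((1 : ZMod 3) + ((3 : ℕ) : ZMod 3)) = 1 by decide] at h
    norm_num at h
    exact h
  have s4 : x 2 1 * x 1 4 = x 1 5 + x 1 3 := by
    have h := hx.2.1 1 4 (by omega)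
    rw [show ((1 : ZMod 3) + ((4 : ℕ) : ZMod 3)) = 2 by decide] at h
    norm_num at h
    exact h
  have s5 : x 0 1 * x 1 5 = x 1 6 + x 1 4 := by
    have h := hx.2.1 1 5 (by omega)
    rw [show ((1 : ZMod 3) + ((5 : ℕ) : ZMod 3)) = 0 by decide] at h
    norm_num at h
    exact h
  have s6 : x 1 1 * x 1 6 = x 1 7 + x 1 5 := by
    have h := hx.2.1 1 6 (by omega)
    rw [show ((1 : ZMod 3) + ((6 : ℕ) : ZMod 3)) = 1 by decide] at h
    norm_num at h
    exact h
  have e2 : x 1 2 = x 2 1 * x 1 1 - 1 := by linear_combination -s1 - h0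
  have e3 : x 1 3 = x 0 1 * (x 2 1 * x 1 1 - 1) - x 1 1 := by
    linear_combination x 0 1 * e2 - s2
  have e4 : x 1 4 = x 1 1 * (x 0 1 * (x 2 1 * x 1 1 - 1) - x 1 1) - (x 2 1 * x 1 1 - 1) := by
    linear_combination x 1 1 * e3 - e2 - s3
  have e5 : x 1 5 = x 2 1 * (x 1 1 * (x 0 1 * (x 2 1 * x 1 1 - 1) - x 1 1) - (x 2 1 * x 1 1 - 1))
      - (x 0 1 * (x 2 1 * x 1 1 - 1) - x 1 1) := by
    linear_combination x 2 1 * e4 - e3 - s4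
  have e6 : x 1 6 = x 0 1 * (x 2 1 * (x 1 1 * (x 0 1 * (x 2 1 * x 1 1 - 1) - x 1 1)
        - (x 2 1 * x 1 1 - 1)) - (x 0 1 * (x 2 1 * x 1 1 - 1) - x 1 1))
      - (x 1 1 * (x 0 1 * (x 2 1 * x 1 1 - 1) - x 1 1) - (x 2 1 * x 1 1 - 1)) := by
    linear_combination x 0 1 * e5 - e4 - s5
  have e7 : x 1 7 = x 1 1 * (x 0 1 * (x 2 1 * (x 1 1 * (x 0 1 * (x 2 1 * x 1 1 - 1) - x 1 1)
          - (x 2 1 * x 1 1 - 1)) - (x 0 1 * (x 2 1 * x 1 1 - 1) - x 1 1))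
        - (x 1 1 * (x 0 1 * (x 2 1 * x 1 1 - 1) - x 1 1) - (x 2 1 * x 1 1 - 1)))
      - (x 2 1 * (x 1 1 * (x 0 1 * (x 2 1 * x 1 1 - 1) - x 1 1) - (x 2 1 * x 1 1 - 1))
        - (x 0 1 * (x 2 1 * x 1 1 - 1) - x 1 1)) := by
    linear_combination x 1 1 * e6 - e5 - s6
  constructor
  · rw [e3, e6, h0]; ring
  · rw [e4, e7]; ring

lemma lem3 (hx : IsTubeSystem 3 x) (k : ℕ) :
    (x 1 1 * x 2 1 * x 0 1 - x 1 1 - x 2 1 - x 0 1) * x 1 (k + 3)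
      = x 1 (k + 6) + x 1 k := by
  induction k using Nat.twoStepInduction with
  | zero =>
    norm_num
    exact (lem3base x hx).1
  | one =>
    norm_num
    exact (lem3base x hx).2
  | more k ih1 ih2 =>
    have E1 := ustep x hx (k + 3)
    have E4 := ustep x hx (k + 6)
    have E5 := ustep x hx k
    rw [show k + 3 + 1 = k + 4 by omega, show k + 3 + 2 = k + 5 by omega,
      castP (k + 4) (k + 1) (by omega)] at E1
    rw [show k + 6 + 1 = k + 7 by omega, show k + 6 + 2 = k + 8 by omega,
      castP (k + 7) (k + 4) (by omega), castP (k + 4) (k + 1) (by omega)] at E4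
    rw [show k + 1 + 3 = k + 4 by omega, show k + 1 + 6 = k + 7 by omega] at ih2
    rw [show k + 2 + 3 = k + 5 by omega, show k + 2 + 6 = k + 8 by omega]
    linear_combination (-(x 1 1 * x 2 1 * x 0 1 - x 1 1 - x 2 1 - x 0 1)) * E1
      + x (1 + ((k + 1 : ℕ) : ZMod 3)) 1 * ih2 - ih1 + E4 + E5

lemma sumkey (hx : IsTubeSystem 3 x) (m p : ℕ) :
    (x 1 1 * x 2 1 * x 0 1 - x 1 1 - x 2 1 - x 0 1) * Us x m (p + 3)
      = Us x (m + 1) p + Ws x m (p + 3) := by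
  induction m with
  | zero =>
    have h := lem3 x hx p
    simp only [Us, Ws, Finset.sum_range_one, Finset.sum_range_succ, Finset.sum_range_zero]
    rw [show p + 3 + 6 * 0 = p + 3 by omega, show p + 6 * 0 = p by omega,
      show p + 6 * 1 = p + 6 by omega]
    linear_combination h
  | succ m ih =>
    have h := lem3 x hx (p + 6 * (m + 1))
    rw [Us_succ x m (p + 3), Us_succ x (m + 1) p, Ws_succ x m (p + 3)]
    rw [show p + 3 + 6 * (m + 1) = p + 6 * (m + 1) + 3 by omega,
      show p + 6 * (m + 1 + 1) = p + 6 * (m + 1) + 6 by omega,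
      show p + 3 + 3 + 6 * m = p + 6 * (m + 1) by omega]
    linear_combination ih + h

lemma vstepA (hx : IsTubeSystem 3 x) (m : ℕ) :
    x 1 1 * x 2 (3 * m + 2) = x 2 (3 * m + 3) + x 2 (3 * m + 1) := by
  have h := hx.2.1 2 (3 * m + 2) (by omega)
  rw [show ((2 : ZMod 3) + ((3 * m + 2 : ℕ) : ZMod 3)) = 1 by
      have h3 : (3 : ZMod 3) = 0 := by decide
      push_cast
      linear_combination ((m : ZMod 3) + 1) * h3] at h
  rw [show 3 * m + 2 + 1 = 3 * m + 3 by omega, show 3 * m + 2 - 1 = 3 * m + 1 by omega] at h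
  exact h

lemma vstepB (hx : IsTubeSystem 3 x) (m : ℕ) :
    x 2 1 * x 2 (3 * m + 3) = x 2 (3 * m + 4) + x 2 (3 * m + 2) := by
  have h := hx.2.1 2 (3 * m + 3) (by omega)
  rw [show ((2 : ZMod 3) + ((3 * m + 3 : ℕ) : ZMod 3)) = 2 by
      have h3 : (3 : ZMod 3) = 0 := by decide
      push_cast
      linear_combination ((m : ZMod 3) + 1) * h3] at h
  rw [show 3 * m + 3 + 1 = 3 * m + 4 by omega, show 3 * m + 3 - 1 = 3 * m + 2 by omega] at h
  exact h

lemma vstepZ (hx : IsTubeSystem 3 x) (m : ℕ) :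
    x 0 1 * x 2 (3 * m + 4) = x 2 (3 * m + 5) + x 2 (3 * m + 3) := by
  have h := hx.2.1 2 (3 * m + 4) (by omega)
  rw [show ((2 : ZMod 3) + ((3 * m + 4 : ℕ) : ZMod 3)) = 0 by
      have h3 : (3 : ZMod 3) = 0 := by decide
      push_cast
      linear_combination ((m : ZMod 3) + 2) * h3] at h
  rw [show 3 * m + 4 + 1 = 3 * m + 5 by omega, show 3 * m + 4 - 1 = 3 * m + 3 by omega] at h
  exact h

lemma main (hx : IsTubeSystem 3 x) (m : ℕ) :
    (∀ p, x 2 (3 * m) * x 1 (3 * m + p) = Us x m p + x 0 1 * Ws x m p) ∧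
    (∀ p, x 2 (3 * m + 1) * x 1 (3 * m + p) = x 2 1 * Us x m p + Ws x m p) ∧
    (∀ p, x 2 (3 * m + 2) * x 1 (3 * m + p) = x 0 1 * x 2 1 * Us x m p - Us x m p) := by
  induction m with
  | zero =>
    have h2 : x 0 1 * x 2 1 = x 2 2 + x 2 0 := by
      have h := hx.2.1 2 1 le_rfl
      rw [show ((2 : ZMod 3) + ((1 : ℕ) : ZMod 3)) = 0 by decide] at h
      norm_num at h
      exact h
    have hv0 : x 2 0 = 1 := hx.1 2
    refine ⟨fun p => ?_, fun p => ?_, fun p => ?_⟩ <;>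
      simp only [Us, Ws, Finset.sum_range_one, Finset.sum_range_zero,
        Nat.mul_zero, Nat.zero_add, Nat.add_zero, Nat.zero_mul, hv0]
    · ring
    · ring
    · linear_combination (-(x 1 p)) * h2 - x 1 p * hv0
  | succ m ih =>
    obtain ⟨ih0, ih1, ih2⟩ := ih
    have H0 : ∀ p, x 2 (3 * m + 3) * x 1 (3 * m + (p + 3))
        = Us x (m + 1) p + x 0 1 * Ws x (m + 1) p := by
      intro p
      rw [Ws_eq]
      have hA := vstepA x hx m
      have h1 := ih1 (p + 3)
      have h2 := ih2 (p + 3)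
      have hk := sumkey x hx m p
      linear_combination (-(x 1 (3 * m + (p + 3)))) * hA + x 1 1 * h2 - h1 + hk
    have H1 : ∀ p, x 2 (3 * m + 4) * x 1 (3 * m + (p + 3))
        = x 2 1 * Us x (m + 1) p + Ws x (m + 1) p := by
      intro p
      rw [Ws_eq]
      have hB := vstepB x hx m
      have h0 := H0 p
      rw [Ws_eq] at h0
      have h2 := ih2 (p + 3)
      linear_combination (-(x 1 (3 * m + (p + 3)))) * hB + x 2 1 * h0 - h2
    have H2 : ∀ p, x 2 (3 * m + 5) * x 1 (3 * m + (p + 3))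
        = x 0 1 * x 2 1 * Us x (m + 1) p - Us x (m + 1) p := by
      intro p
      have hZ := vstepZ x hx m
      have h1 := H1 p
      have h0 := H0 p
      linear_combination (-(x 1 (3 * m + (p + 3)))) * hZ + x 0 1 * h1 - h0
    refine ⟨fun p => ?_, fun p => ?_, fun p => ?_⟩
    · rw [show 3 * (m + 1) = 3 * m + 3 by omega, show 3 * m + 3 + p = 3 * m + (p + 3) by omega]
      exact H0 p
    · rw [show 3 * (m + 1) + 1 = 3 * m + 4 by omega,
        show 3 * (m + 1) + p = 3 * m + (p + 3) by omega]
      exact H1 p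
    · rw [show 3 * (m + 1) + 2 = 3 * m + 5 by omega,
        show 3 * (m + 1) + p = 3 * m + (p + 3) by omega]
      exact H2 p

lemma Vsum (m p : ℕ) :
    ∑ t ∈ Finset.range (2 * m + 1),
        (if Even t then x 2 1 * x 1 (p + 3 * t) else x 1 (p + 3 * t))
      = x 2 1 * Us x m p + Ws x m p := by
  induction m with
  | zero =>
    simp [Us, Ws]
  | succ m ih =>
    rw [show 2 * (m + 1) + 1 = 2 * m + 1 + 1 + 1 by omega, Finset.sum_range_succ,
      Finset.sum_range_succ, ih, Us_succ, Ws_succ]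
    have hev : Even (2 * m + 1 + 1) := by rw [Nat.even_iff]; omega
    have hod : ¬ Even (2 * m + 1) := by rw [Nat.even_iff]; omega
    rw [if_pos hev, if_neg hod,
      show p + 3 * (2 * m + 1 + 1) = p + 6 * (m + 1) by omega,
      show p + 3 * (2 * m + 1) = p + 3 + 6 * m by omega]
    ring

end TubeAux3

/-- Proposition 7.2(1). -/
theorem tube_rank_three_prop_7_2_1 {R : Type*} [CommRing R]
    (x : ZMod 3 → ℕ → R) (hx : IsTubeSystem 3 x)
    (m n : ℕ) (hn : 3 * m + 1 ≤ n) :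
    x 2 (3 * m + 1) * x 1 n
      = ∑ t ∈ Finset.range (2 * m + 1),
          if Even t then x 2 1 * x 1 (n + 3 * m - 3 * t)
          else x 1 (n + 3 * m - 3 * t) := by
  obtain ⟨p, rfl⟩ : ∃ p, n = 3 * m + p := ⟨n - 3 * m, by omega⟩
  have hmain := (TubeAux3.main x hx m).2.1 p
  rw [hmain, ← TubeAux3.Vsum x m p, ← Finset.sum_range_reflect]
  refine Finset.sum_congr rfl fun t ht => ?_
  rw [Finset.mem_range] at ht
  rw [show 2 * m + 1 - 1 - t = 2 * m - t by omega,
    show p + 3 * (2 * m - t) = 3 * m + p + 3 * m - 3 * t by omega]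
  have hiff : Even (2 * m - t) ↔ Even t := by
    rw [Nat.even_iff, Nat.even_iff]
    omega
  simp only [hiff]
end

section
/- Let x : ZMod 3 → ℕ → R be a tube system of rank 3 over a commutative ring R, and let m ≥ 0 and n ≥ 3m+2 be integers. Then x 2 (3m+2) · x 1 n = ∑_{t=0}^{2m+1} d_t, where d_t = x 2 (n+3m+2−3t) if t is even and d_t = x 2 1 · x 2 (n+3m+2−3t) if t is odd. (This is Proposition 7.2(2): X_{E_2[3m+2]} X_{E_1[n]} = X_{E_2[n+3m+2]} + X_{E_2} X_{E_2[n+3m−1]} + X_{E_2[n+3m−4]} + X_{E_2} X_{E_2[n+3m−7]} + ⋯ + X_{E_2[n−3m+2]} + X_{E_2} X_{E_2[n−3m−1]}.) -/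
section Aux

variable {R : Type*} [CommRing R]

/-- Base case `m = 0`: `X_{E_2[2]} X_{E_1[n]} = X_{E_2[n+2]} + X_{E_2} X_{E_2[n-1]}`. -/
lemma tsBase (x : ZMod 3 → ℕ → R) (hx : IsTubeSystem 3 x) (n : ℕ) (hn : 1 ≤ n) :
    x 2 2 * x 1 n = x 2 (n+2) + x 2 1 * x 2 (n-1) := by
  have hA := hx.2.2 1 n hn
  have hC := hx.2.2 0 (n+1) (by omega)
  have hE := hx.2.1 2 1 le_rfl
  have h0 := hx.1 2
  rw [show (1:ZMod 3) - 1 = 0 from by decide, show (1:ZMod 3) + 1 = 2 from by decide] at hA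
  rw [show (0:ZMod 3) - 1 = 2 from by decide, show (0:ZMod 3) + 1 = 1 from by decide,
    show n + 1 - 1 = n from by omega, show n + 1 + 1 = n + 2 from by omega] at hC
  rw [Nat.cast_one, show (2:ZMod 3) + 1 = 0 from by decide, h0] at hE
  linear_combination (x 2 1) * hA + hC - (x 1 n) * hE

/-- The three-step linear recursion with coefficient `Z = abc - a - b - c`. -/
lemma tsZ (x : ZMod 3 → ℕ → R) (hx : IsTubeSystem 3 x) (K : ℕ) (hK : 3 ≤ K) :
    (x 0 1 * x 1 1 * x 2 1 - x 0 1 - x 1 1 - x 2 1) * x 2 K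
      = x 2 (K+3) + x 2 (K-3) := by
  have E : ∀ M : ℕ, 1 ≤ M → x (2 + (M : ZMod 3)) 1 * x 2 M = x 2 (M+1) + x 2 (M-1) :=
    hx.2.1 2
  obtain ⟨j, s, hs, rfl⟩ : ∃ j s, s < 3 ∧ K = 3*j + s + 3 :=
    ⟨(K-3)/3, (K-3)%3, Nat.mod_lt _ (by norm_num), by omega⟩
  rw [show 3*j + s + 3 - 3 = 3*j+s from by omega, show 3*j+s+3+3 = 3*j+s+6 from by omega]
  have E1 : x (2 + ((3*j+s+1 : ℕ) : ZMod 3)) 1 * x 2 (3*j+s+1) = x 2 (3*j+s+2) + x 2 (3*j+s) := by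
    have h := E (3*j+s+1) (by omega)
    rwa [show 3*j+s+1+1 = 3*j+s+2 from by omega, show 3*j+s+1-1 = 3*j+s from by omega] at h
  have E2 : x (2 + ((3*j+s+2 : ℕ) : ZMod 3)) 1 * x 2 (3*j+s+2) = x 2 (3*j+s+3) + x 2 (3*j+s+1) := by
    have h := E (3*j+s+2) (by omega)
    rwa [show 3*j+s+2+1 = 3*j+s+3 from by omega, show 3*j+s+2-1 = 3*j+s+1 from by omega] at h
  have E3 : x (2 + ((3*j+s+3 : ℕ) : ZMod 3)) 1 * x 2 (3*j+s+3) = x 2 (3*j+s+4) + x 2 (3*j+s+2) := by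
    have h := E (3*j+s+3) (by omega)
    rwa [show 3*j+s+3+1 = 3*j+s+4 from by omega, show 3*j+s+3-1 = 3*j+s+2 from by omega] at h
  have E4 : x (2 + ((3*j+s+4 : ℕ) : ZMod 3)) 1 * x 2 (3*j+s+4) = x 2 (3*j+s+5) + x 2 (3*j+s+3) := by
    have h := E (3*j+s+4) (by omega)
    rwa [show 3*j+s+4+1 = 3*j+s+5 from by omega, show 3*j+s+4-1 = 3*j+s+3 from by omega] at h
  have E5 : x (2 + ((3*j+s+5 : ℕ) : ZMod 3)) 1 * x 2 (3*j+s+5) = x 2 (3*j+s+6) + x 2 (3*j+s+4) := by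
    have h := E (3*j+s+5) (by omega)
    rwa [show 3*j+s+5+1 = 3*j+s+6 from by omega, show 3*j+s+5-1 = 3*j+s+4 from by omega] at h
  have hcast : ∀ M : ℕ, (2 + ((3*j+s+M : ℕ) : ZMod 3)) = 2 + ((s+M : ℕ) : ZMod 3) := by
    intro M
    push_cast
    rw [show (3:ZMod 3) = 0 from by decide]
    ring
  rw [hcast] at E1 E2 E3 E4 E5
  interval_cases s
  · rw [show (2 + ((0+1:ℕ) : ZMod 3)) = 0 from by decide] at E1
    rw [show (2 + ((0+2:ℕ) : ZMod 3)) = 1 from by decide] at E2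
    rw [show (2 + ((0+3:ℕ) : ZMod 3)) = 2 from by decide] at E3
    rw [show (2 + ((0+4:ℕ) : ZMod 3)) = 0 from by decide] at E4
    rw [show (2 + ((0+5:ℕ) : ZMod 3)) = 1 from by decide] at E5
    linear_combination (x 0 1 * x 1 1 - 1) * E3 + x 1 1 * E4 + x 0 1 * E2 + E5 + E1
  · rw [show (2 + ((1+1:ℕ) : ZMod 3)) = 1 from by decide] at E1
    rw [show (2 + ((1+2:ℕ) : ZMod 3)) = 2 from by decide] at E2
    rw [show (2 + ((1+3:ℕ) : ZMod 3)) = 0 from by decide] at E3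
    rw [show (2 + ((1+4:ℕ) : ZMod 3)) = 1 from by decide] at E4
    rw [show (2 + ((1+5:ℕ) : ZMod 3)) = 2 from by decide] at E5
    linear_combination (x 1 1 * x 2 1 - 1) * E3 + x 2 1 * E4 + x 1 1 * E2 + E5 + E1
  · rw [show (2 + ((2+1:ℕ) : ZMod 3)) = 2 from by decide] at E1
    rw [show (2 + ((2+2:ℕ) : ZMod 3)) = 0 from by decide] at E2
    rw [show (2 + ((2+3:ℕ) : ZMod 3)) = 1 from by decide] at E3
    rw [show (2 + ((2+4:ℕ) : ZMod 3)) = 2 from by decide] at E4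
    rw [show (2 + ((2+5:ℕ) : ZMod 3)) = 0 from by decide] at E5
    linear_combination (x 2 1 * x 0 1 - 1) * E3 + x 0 1 * E4 + x 2 1 * E2 + E5 + E1

/-- Degenerate instance of the recursion: `Z · X_{E_2[2]} = X_{E_2[5]}`. -/
lemma tsZ2 (x : ZMod 3 → ℕ → R) (hx : IsTubeSystem 3 x) :
    (x 0 1 * x 1 1 * x 2 1 - x 0 1 - x 1 1 - x 2 1) * x 2 2 = x 2 5 := by
  have E1 := hx.2.1 2 1 (by omega)
  have E2 := hx.2.1 2 2 (by omega)
  have E3 := hx.2.1 2 3 (by omega)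
  have E4 := hx.2.1 2 4 (by omega)
  have h0 := hx.1 2
  norm_num at E1 E2 E3 E4
  rw [show (3:ZMod 3) = 0 from by decide, h0] at E1
  rw [show (4:ZMod 3) = 1 from by decide] at E2
  rw [show (5:ZMod 3) = 2 from by decide] at E3
  rw [show (6:ZMod 3) = 0 from by decide] at E4
  linear_combination x 2 1 * E1 + (x 0 1 * x 2 1 - 1) * E2 + x 0 1 * E3 + E4

lemma tsAux (x : ZMod 3 → ℕ → R) (hx : IsTubeSystem 3 x) :
    ∀ m n : ℕ, 3 * m + 2 ≤ n →
    x 2 (3 * m + 2) * x 1 n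
      = ∑ t ∈ Finset.range (2 * m + 2),
          if Even t then x 2 (n + 3 * m + 2 - 3 * t)
          else x 2 1 * x 2 (n + 3 * m + 2 - 3 * t) := by
  intro m
  induction m using Nat.strong_induction_on with
  | _ m IH =>
  intro n hn
  obtain _ | m := m
  · -- m = 0
    rw [show 2*0+2 = 0+1+1 from by omega, Finset.sum_range_succ, Finset.sum_range_succ,
      Finset.sum_range_zero]
    rw [if_pos (by decide : Even 0), if_neg (by decide : ¬ Even 1)]
    rw [show n+3*0+2-3*0 = n+2 from by omega, show n+3*0+2-3*1 = n-1 from by omega,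
      show 3*0+2 = 2 from by omega]
    have hb := tsBase x hx n (by omega)
    linear_combination hb
  obtain _ | k := m
  · -- m = 1
    have hb := tsBase x hx n (by omega)
    have h5 := tsZ2 x hx
    have hz1 := tsZ x hx (n+2) (by omega)
    have hz2 := tsZ x hx (n-1) (by omega)
    rw [show n+2+3 = n+5 from by omega, show n+2-3 = n-1 from by omega] at hz1
    rw [show n-1+3 = n+2 from by omega, show n-1-3 = n-4 from by omega] at hz2
    rw [show 2*(0+1)+2 = 0+1+1+1+1 from by omega, Finset.sum_range_succ, Finset.sum_range_succ,
      Finset.sum_range_succ, Finset.sum_range_succ, Finset.sum_range_zero]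
    rw [if_pos (by decide : Even 0), if_neg (by decide : ¬ Even (0+1)),
      if_pos (by decide : Even (0+1+1)), if_neg (by decide : ¬ Even (0+1+1+1))]
    rw [show n+3*(0+1)+2-3*0 = n+5 from by omega, show n+3*(0+1)+2-3*(0+1) = n+2 from by omega,
      show n+3*(0+1)+2-3*(0+1+1) = n-1 from by omega,
      show n+3*(0+1)+2-3*(0+1+1+1) = n-4 from by omega,
      show 3*(0+1)+2 = 5 from by omega]
    linear_combination (x 0 1 * x 1 1 * x 2 1 - x 0 1 - x 1 1 - x 2 1) * hb + hz1
      + x 2 1 * hz2 - x 1 n * h5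
  · -- m = k+2
    have IH1 := IH (k+1) (by omega) n (by omega)
    have IH0 := IH k (by omega) n (by omega)
    have hz := tsZ x hx (3*k+5) (by omega)
    rw [show 3*k+5+3 = 3*k+8 from by omega, show 3*k+5-3 = 3*k+2 from by omega] at hz
    rw [show 3*(k+1)+2 = 3*k+5 from by omega] at IH1
    rw [show 3*(k+1+1)+2 = 3*k+8 from by omega]
    have hZS : (x 0 1 * x 1 1 * x 2 1 - x 0 1 - x 1 1 - x 2 1) *
        (∑ t ∈ Finset.range (2*(k+1)+2),
          if Even t then x 2 (n + 3*(k+1) + 2 - 3*t) else x 2 1 * x 2 (n + 3*(k+1) + 2 - 3*t))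
        = (∑ t ∈ Finset.range (2*(k+1)+2),
            if Even t then x 2 (n + 3*(k+1+1) + 2 - 3*t)
            else x 2 1 * x 2 (n + 3*(k+1+1) + 2 - 3*t))
          + (∑ t ∈ Finset.range (2*(k+1)+2),
            if Even t then x 2 (n + 3*k + 2 - 3*t)
            else x 2 1 * x 2 (n + 3*k + 2 - 3*t)) := by
      rw [Finset.mul_sum, ← Finset.sum_add_distrib]
      refine Finset.sum_congr rfl fun t ht => ?_
      simp only [Finset.mem_range] at ht
      have hz' := tsZ x hx (n + 3*(k+1) + 2 - 3*t) (by omega)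
      rw [show n+3*(k+1)+2-3*t+3 = n+3*(k+1+1)+2-3*t from by omega,
        show n+3*(k+1)+2-3*t-3 = n+3*k+2-3*t from by omega] at hz'
      split_ifs
      · exact hz'
      · linear_combination x 2 1 * hz'
    have hev : Even (2*(k+1)+2) := ⟨k+2, by ring⟩
    have hod : ¬ Even (2*(k+1)+2+1) := by simp [Nat.even_add_one]
    have hev' : Even (2*k+2) := ⟨k+1, by ring⟩
    have hod' : ¬ Even (2*k+2+1) := by simp [Nat.even_add_one]
    have hB : (∑ t ∈ Finset.range (2*(k+1)+2),
          if Even t then x 2 (n + 3*k + 2 - 3*t) else x 2 1 * x 2 (n + 3*k + 2 - 3*t))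
        = (∑ t ∈ Finset.range (2*k+2),
            if Even t then x 2 (n + 3*k + 2 - 3*t) else x 2 1 * x 2 (n + 3*k + 2 - 3*t))
          + x 2 (n - (3*k+4)) + x 2 1 * x 2 (n - (3*k+7)) := by
      rw [show 2*(k+1)+2 = 2*k+2+1+1 from by omega, Finset.sum_range_succ, Finset.sum_range_succ]
      rw [if_pos hev', if_neg hod']
      rw [show n+3*k+2-3*(2*k+2) = n-(3*k+4) from by omega,
        show n+3*k+2-3*(2*k+2+1) = n-(3*k+7) from by omega]
    rw [show 2*(k+1+1)+2 = 2*(k+1)+2+1+1 from by omega, Finset.sum_range_succ,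
      Finset.sum_range_succ]
    rw [if_pos hev, if_neg hod]
    rw [show n+3*(k+1+1)+2-3*(2*(k+1)+2) = n-(3*k+4) from by omega,
      show n+3*(k+1+1)+2-3*(2*(k+1)+2+1) = n-(3*k+7) from by omega]
    linear_combination (x 0 1 * x 1 1 * x 2 1 - x 0 1 - x 1 1 - x 2 1) * IH1
      - x 1 n * hz - IH0 + hZS + hB

end Aux

/-- Proposition 7.2(2). -/
theorem tube_rank_three_prop_7_2_2 {R : Type*} [CommRing R]
    (x : ZMod 3 → ℕ → R) (hx : IsTubeSystem 3 x)
    (m n : ℕ) (hn : 3 * m + 2 ≤ n) :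
    x 2 (3 * m + 2) * x 1 n
      = ∑ t ∈ Finset.range (2 * m + 2),
          if Even t then x 2 (n + 3 * m + 2 - 3 * t)
          else x 2 1 * x 2 (n + 3 * m + 2 - 3 * t) :=
  tsAux x hx m n hn
end

section
/- Let x : ZMod 3 → ℕ → R be a tube system of rank 3 over a commutative ring R, and let m ≥ 0 and n ≥ 3m+3 be integers. Then x 2 (3m+3) · x 1 n = ∑_{s=0}^{m} ( x 1 (n+3m+3−6s) + x 3 (n+3m+1−6s) + x 2 (n+3m−1−6s) ) + x 1 (n−3m−3). (This is Proposition 7.2(3): X_{E_2[3m+3]} X_{E_1[n]} = X_{E_1[n+3m+3]} + X_{E_3[n+3m+1]} + X_{E_2[n+3m−1]} + X_{E_1[n+3m−3]} + X_{E_3[n+3m−5]} + X_{E_2[n+3m−7]} + ⋯ + X_{E_1[n−3m+3]} + X_{E_3[n−3m+1]} + X_{E_2[n−3m−1]} + X_{E_1[n−3m−3]}.) -/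
set_option maxHeartbeats 2000000

private lemma tube_shift_abstract {R : Type*} [CommRing R] (f : ℕ → R) (k : ℕ) :
    (∑ s ∈ Finset.range (k+1), (f (s+1) + f s))
      = (∑ s ∈ Finset.range (k+2), f s) + ∑ s ∈ Finset.range k, f (s+1) := by
  rw [Finset.sum_add_distrib, Finset.sum_range_succ' f k,
    show k+2 = (k+1)+1 from rfl, Finset.sum_range_succ' f (k+1)]
  ring

private lemma tube_aux {R : Type*} [CommRing R] (x : ZMod 3 → ℕ → R)
    (hx : IsTubeSystem 3 x) :
    ∀ k d : ℕ, x 2 (3*k) * x 1 (3*k+d)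
      = (∑ s ∈ Finset.range k,
          (x 1 (6*s+6+d) + x 0 (6*s+4+d) + x 2 (6*s+2+d))) + x 1 d := by
  obtain ⟨h0, -, h3⟩ := hx
  have rr0 : ∀ M : ℕ, x 2 1 * x 0 (M+1) = x 2 (M+2) + x 1 M := by
    intro M
    have h := h3 0 (M+1) (Nat.le_add_left 1 M)
    have e1 : (0:ZMod 3) - 1 = 2 := by decide
    have e2 : (0:ZMod 3) + 1 = 1 := by decide
    rw [e1, e2, Nat.add_sub_cancel] at h
    exact h
  have rr1 : ∀ M : ℕ, x 0 1 * x 1 (M+1) = x 0 (M+2) + x 2 M := by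
    intro M
    have h := h3 1 (M+1) (Nat.le_add_left 1 M)
    have e1 : (1:ZMod 3) - 1 = 0 := by decide
    have e2 : (1:ZMod 3) + 1 = 2 := by decide
    rw [e1, e2, Nat.add_sub_cancel] at h
    exact h
  have rr2 : ∀ M : ℕ, x 1 1 * x 2 (M+1) = x 1 (M+2) + x 0 M := by
    intro M
    have h := h3 2 (M+1) (Nat.le_add_left 1 M)
    have e1 : (2:ZMod 3) - 1 = 1 := by decide
    have e2 : (2:ZMod 3) + 1 = 0 := by decide
    rw [e1, e2, Nat.add_sub_cancel] at h
    exact h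
  have Q1 : ∀ M : ℕ,
      (x 2 1 * x 1 1 * x 0 1 - x 0 1 - x 1 1 - x 2 1) * x 1 (M+3)
        = x 1 (M+6) + x 1 M := by
    intro M
    linear_combination (norm := ring_nf)
      (x 2 1 * x 1 1 - 1) * rr1 (M+2) + x 2 1 * rr2 (M+1) + rr0 M
        + x 1 1 * rr0 (M+3) + rr2 (M+4)
  have Q0 : ∀ M : ℕ,
      (x 2 1 * x 1 1 * x 0 1 - x 0 1 - x 1 1 - x 2 1) * x 0 (M+3)
        = x 0 (M+6) + x 0 M := by
    intro M
    linear_combination (norm := ring_nf)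
      (x 0 1 * x 1 1 - 1) * rr0 (M+2) + x 0 1 * rr2 (M+3) + x 1 1 * rr1 (M+1)
        + rr1 (M+4) + rr2 M
  have Q2 : ∀ M : ℕ,
      (x 2 1 * x 1 1 * x 0 1 - x 0 1 - x 1 1 - x 2 1) * x 2 (M+3)
        = x 2 (M+6) + x 2 M := by
    intro M
    linear_combination (norm := ring_nf)
      (x 2 1 * x 0 1 - 1) * rr2 (M+2) + x 2 1 * rr1 (M+3) + x 0 1 * rr0 (M+1)
        + rr0 (M+4) + rr1 M
  have X23 : x 2 3 = x 2 1 * x 1 1 * x 0 1 - x 1 1 - x 2 1 := by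
    linear_combination (norm := ring_nf) (-1 : R) * rr0 1 - x 2 1 * rr1 0 - x 2 1 * h0 2
  have base0 : ∀ d : ℕ, x 2 (3*0) * x 1 (3*0+d)
      = (∑ s ∈ Finset.range 0,
          (x 1 (6*s+6+d) + x 0 (6*s+4+d) + x 2 (6*s+2+d))) + x 1 d := by
    intro d
    simp [h0]
  have base1 : ∀ d : ℕ, x 2 (3*1) * x 1 (3*1+d)
      = (∑ s ∈ Finset.range 1,
          (x 1 (6*s+6+d) + x 0 (6*s+4+d) + x 2 (6*s+2+d))) + x 1 d := by
    intro d
    rw [Finset.sum_range_one]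
    linear_combination (norm := ring_nf) Q1 d + rr1 (d+2) + x 1 (d+3) * X23
  have main : ∀ k : ℕ,
      (∀ d : ℕ, x 2 (3*k) * x 1 (3*k+d)
        = (∑ s ∈ Finset.range k,
            (x 1 (6*s+6+d) + x 0 (6*s+4+d) + x 2 (6*s+2+d))) + x 1 d) ∧
      (∀ d : ℕ, x 2 (3*(k+1)) * x 1 (3*(k+1)+d)
        = (∑ s ∈ Finset.range (k+1),
            (x 1 (6*s+6+d) + x 0 (6*s+4+d) + x 2 (6*s+2+d))) + x 1 d) := by
    intro k
    induction k with
    | zero => exact ⟨base0, base1⟩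
    | succ k ih =>
      refine ⟨ih.2, ?_⟩
      intro d
      have A1 := ih.2 (d+3)
      have A0 := ih.1 (d+6)
      have hq2 := Q2 (3*k)
      have hmul : (x 2 1 * x 1 1 * x 0 1 - x 0 1 - x 1 1 - x 2 1)
            * (∑ s ∈ Finset.range (k+1),
                (x 1 (6*s+6+(d+3)) + x 0 (6*s+4+(d+3)) + x 2 (6*s+2+(d+3))))
          = ∑ s ∈ Finset.range (k+1),
              ((x 1 (6*(s+1)+6+d) + x 0 (6*(s+1)+4+d) + x 2 (6*(s+1)+2+d))
                + (x 1 (6*s+6+d) + x 0 (6*s+4+d) + x 2 (6*s+2+d))) := by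
        rw [Finset.mul_sum]
        refine Finset.sum_congr rfl fun s _ => ?_
        linear_combination (norm := ring_nf)
          Q1 (6*s+6+d) + Q0 (6*s+4+d) + Q2 (6*s+2+d)
      have hA0s : (∑ s ∈ Finset.range k,
            (x 1 (6*s+6+(d+6)) + x 0 (6*s+4+(d+6)) + x 2 (6*s+2+(d+6))))
          = ∑ s ∈ Finset.range k,
              (x 1 (6*(s+1)+6+d) + x 0 (6*(s+1)+4+d) + x 2 (6*(s+1)+2+d)) := by
        refine Finset.sum_congr rfl fun s _ => ?_
        have e1 : 6*s+6+(d+6) = 6*(s+1)+6+d := by omega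
        have e2 : 6*s+4+(d+6) = 6*(s+1)+4+d := by omega
        have e3 : 6*s+2+(d+6) = 6*(s+1)+2+d := by omega
        rw [e1, e2, e3]
      have sh : (∑ s ∈ Finset.range (k+1),
            ((x 1 (6*(s+1)+6+d) + x 0 (6*(s+1)+4+d) + x 2 (6*(s+1)+2+d))
              + (x 1 (6*s+6+d) + x 0 (6*s+4+d) + x 2 (6*s+2+d))))
          = (∑ s ∈ Finset.range (k+2),
              (x 1 (6*s+6+d) + x 0 (6*s+4+d) + x 2 (6*s+2+d)))
            + ∑ s ∈ Finset.range k,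
                (x 1 (6*(s+1)+6+d) + x 0 (6*(s+1)+4+d) + x 2 (6*(s+1)+2+d)) :=
        tube_shift_abstract (fun s => x 1 (6*s+6+d) + x 0 (6*s+4+d) + x 2 (6*s+2+d)) k
      have g2 : 3*(k+1) = 3*k+3 := by ring
      rw [g2] at A1
      have g3 : 3*k+3+(d+3) = 3*k+6+d := by omega
      rw [g3] at A1
      have g4 : 3*k+(d+6) = 3*k+6+d := by omega
      rw [g4] at A0
      have g1 : 3*(k+1+1) = 3*k+6 := by ring
      rw [show k+1+1 = k+2 from rfl, g1]
      linear_combination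
        (-(x 1 (3*k+6+d))) * hq2
          + (x 2 1 * x 1 1 * x 0 1 - x 0 1 - x 1 1 - x 2 1) * A1
          - A0 + hmul + Q1 d + sh - hA0s
  exact fun k d => (main k).1 d

/-- Proposition 7.2(3). -/
theorem tube_rank_three_prop_7_2_3 {R : Type*} [CommRing R]
    (x : ZMod 3 → ℕ → R) (hx : IsTubeSystem 3 x)
    (m n : ℕ) (hn : 3 * m + 3 ≤ n) :
    x 2 (3 * m + 3) * x 1 n
      = (∑ s ∈ Finset.range (m + 1),
          (x 1 (n + 3 * m + 3 - 6 * s) + x 3 (n + 3 * m + 1 - 6 * s)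
            + x 2 (n + 3 * m - 1 - 6 * s)))
        + x 1 (n - 3 * m - 3) := by
  set d := n - (3*m+3) with hd
  have H := tube_aux x hx (m+1) d
  have e1 : 3*(m+1) + d = n := by omega
  have e2 : 3*(m+1) = 3*m+3 := by omega
  rw [e1, e2] at H
  have h3z : (3 : ZMod 3) = 0 := by decide
  rw [h3z]
  have key : (∑ s ∈ Finset.range (m+1),
        ((fun s => x 1 (6*s+6+d) + x 0 (6*s+4+d) + x 2 (6*s+2+d)) ((m+1) - 1 - s)))
      = ∑ s ∈ Finset.range (m+1),
          (x 1 (6*s+6+d) + x 0 (6*s+4+d) + x 2 (6*s+2+d)) :=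
    Finset.sum_range_reflect (fun s => x 1 (6*s+6+d) + x 0 (6*s+4+d) + x 2 (6*s+2+d)) (m+1)
  have key2 : (∑ s ∈ Finset.range (m+1),
        (x 1 (n + 3*m + 3 - 6*s) + x 0 (n + 3*m + 1 - 6*s) + x 2 (n + 3*m - 1 - 6*s)))
      = ∑ s ∈ Finset.range (m+1),
          ((fun s => x 1 (6*s+6+d) + x 0 (6*s+4+d) + x 2 (6*s+2+d)) ((m+1) - 1 - s)) := by
    refine Finset.sum_congr rfl fun s hs => ?_
    rw [Finset.mem_range] at hs
    show _ = x 1 (6*((m+1)-1-s)+6+d) + x 0 (6*((m+1)-1-s)+4+d) + x 2 (6*((m+1)-1-s)+2+d)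
    have f1 : n + 3*m + 3 - 6*s = 6*((m+1)-1-s)+6+d := by omega
    have f2 : n + 3*m + 1 - 6*s = 6*((m+1)-1-s)+4+d := by omega
    have f3 : n + 3*m - 1 - 6*s = 6*((m+1)-1-s)+2+d := by omega
    rw [f1, f2, f3]
  rw [key2, key, H]
  have e3 : n - 3*m - 3 = d := by omega
  rw [e3]
end

section
/- Let x : ZMod 3 → ℕ → R be a tube system of rank 3 over a commutative ring R, and let m ≥ 0 and n ≥ 3m+1 be integers with n ≡ 1 (mod 3). Then x 2 (3m+1) · x 1 n = ∑_{t=0}^{3m+1} x 1 (n+3m+1−2t). (This is Corollary 7.3(1): for n ≡ 1 mod 3, X_{E_2[3m+1]} X_{E_1[n]} = X_{E_1[n+3m+1]} + X_{E_1[n+3m−1]} + X_{E_1[n+3m−3]} + ⋯ + X_{E_1[n−3m+1]} + X_{E_1[n−3m−1]}.) -/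
namespace TubeAux

lemma cast3 (k r : ℕ) (h : k % 3 = r) : ((k:ℕ) : ZMod 3) = ((r:ℕ) : ZMod 3) := by
  conv_lhs => rw [← Nat.div_add_mod k 3]
  push_cast [h]
  simp [show (3:ZMod 3) = 0 by decide]

variable {R : Type*} [CommRing R] (x : ZMod 3 → ℕ → R)

/-- all-ones sum -/
def As (m n : ℕ) : R := ∑ t ∈ Finset.range (3*m+2), x 1 (n + (3*m+1) - 2*t)

/-- pure-cycle sum -/
def Ps (l n : ℕ) : R := ∑ t ∈ Finset.range (l+1), x (1 - (t : ZMod 3)) (n + l - 2*t)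

variable {x}

section rels
variable (hx : IsTubeSystem 3 x)
include hx

lemma mulII (i j : ZMod 3) (k a b : ℕ) (hk : 1 ≤ k) (hj : i + (k : ZMod 3) = j)
    (ha : a = k+1) (hb : b = k-1) : x j 1 * x i k = x i a + x i b := by
  subst ha hb; rw [← hj]; exact hx.2.1 i k hk

lemma mulIII (i j i' : ZMod 3) (k a b : ℕ) (hk : 1 ≤ k) (hj : i - 1 = j) (hi' : i + 1 = i')
    (ha : a = k+1) (hb : b = k-1) : x j 1 * x i k = x j a + x i' b := by
  subst ha hb; rw [← hj, ← hi']; exact hx.2.2 i k hk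

lemma exch (i j i' : ZMod 3) (N a b : ℕ) (hN : 1 ≤ N) (h2 : N % 3 = 2)
    (hj : i - 1 = j) (hi' : i + 1 = i') (ha : a = N+1) (hb : b = N-1) :
    x i a + x i b = x j a + x i' b := by
  have h1 : x j 1 * x i N = x i a + x i b := by
    refine mulII hx i j N a b hN ?_ ha hb
    rw [cast3 N 2 h2, ← hj, show ((2:ℕ):ZMod 3) = -1 by decide]; ring
  have h2' : x j 1 * x i N = x j a + x i' b := mulIII hx i j i' N a b hN hj hi' ha hb
  rw [← h1, h2']

end rels

-- base expansions
lemma As0 (n : ℕ) : As x 0 n = x 1 (n+1) + x 1 (n-1) := by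
  simp [As, Finset.sum_range_succ]

lemma As1 (n : ℕ) : As x 1 n = x 1 (n+4) + x 1 (n+2) + x 1 n + x 1 (n-2) + x 1 (n-4) := by
  simp [As, Finset.sum_range_succ]

lemma Ps00 (n : ℕ) : Ps x 0 n = x 1 n := by
  simp [Ps]

lemma Ps20 (n : ℕ) : Ps x 2 n = x 1 (n+2) + x 0 n + x 2 (n-2) := by
  simp [Ps, Finset.sum_range_succ]
  rw [show ((1:ZMod 3) - 2) = 2 by decide]

lemma Ps30 (n : ℕ) : Ps x 3 n = x 1 (n+3) + x 0 (n+1) + x 2 (n-1) + x 1 (n-3) := by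
  simp [Ps, Finset.sum_range_succ]
  rw [show ((1:ZMod 3) - 2) = 2 by decide, show ((1:ZMod 3) - 3) = 1 by decide]


-- peeling lemmas
lemma As_succ (m n : ℕ) : As x (m+1) n
    = As x m (n+3) + (x 1 (n-3*m) + x 1 (n-(3*m+2)) + x 1 (n-(3*m+4))) := by
  unfold As
  rw [show 3*(m+1)+2 = 3*m+2+1+1+1 by omega, Finset.sum_range_succ, Finset.sum_range_succ,
    Finset.sum_range_succ,
    show n+(3*(m+1)+1)-2*(3*m+2) = n-3*m by omega,
    show n+(3*(m+1)+1)-2*(3*m+2+1) = n-(3*m+2) by omega,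
    show n+(3*(m+1)+1)-2*(3*m+2+1+1) = n-(3*m+4) by omega]
  have hpre : (∑ t ∈ Finset.range (3*m+2), x 1 (n + (3*(m+1)+1) - 2*t))
      = ∑ t ∈ Finset.range (3*m+2), x 1 ((n+3) + (3*m+1) - 2*t) :=
    Finset.sum_congr rfl (fun t _ => by congr 1; omega)
  rw [hpre]; ring

lemma Ps0_succ (m n : ℕ) : Ps x (3*(m+1)) n
    = Ps x (3*m) (n+3) + (x 0 (n+1-3*m) + x 2 (n-(3*m+1)) + x 1 (n-(3*m+3))) := by
  unfold Ps
  rw [show 3*(m+1)+1 = 3*m+1+1+1+1 by omega, Finset.sum_range_succ, Finset.sum_range_succ,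
    Finset.sum_range_succ,
    show ((1:ZMod 3) - ((3*m+1:ℕ):ZMod 3)) = 0 by rw [cast3 (3*m+1) 1 (by omega)]; decide,
    show ((1:ZMod 3) - ((3*m+1+1:ℕ):ZMod 3)) = 2 by rw [cast3 (3*m+1+1) 2 (by omega)]; decide,
    show ((1:ZMod 3) - ((3*m+1+1+1:ℕ):ZMod 3)) = 1 by rw [cast3 (3*m+1+1+1) 0 (by omega)]; decide,
    show n+3*(m+1)-2*(3*m+1) = n+1-3*m by omega,
    show n+3*(m+1)-2*(3*m+1+1) = n-(3*m+1) by omega,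
    show n+3*(m+1)-2*(3*m+1+1+1) = n-(3*m+3) by omega]
  have hpre : (∑ t ∈ Finset.range (3*m+1), x (1 - (t:ZMod 3)) (n + 3*(m+1) - 2*t))
      = ∑ t ∈ Finset.range (3*m+1), x (1 - (t:ZMod 3)) ((n+3) + 3*m - 2*t) :=
    Finset.sum_congr rfl (fun t _ => by congr 1; omega)
  rw [hpre]; ring

lemma Ps2_succ (m n : ℕ) : Ps x (3*(m+1)+2) n
    = Ps x (3*m+2) (n+3) + (x 1 (n-(3*m+1)) + x 0 (n-(3*m+3)) + x 2 (n-(3*m+5))) := by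
  unfold Ps
  rw [show 3*(m+1)+2+1 = 3*m+3+1+1+1 by omega, Finset.sum_range_succ, Finset.sum_range_succ,
    Finset.sum_range_succ,
    show ((1:ZMod 3) - ((3*m+3:ℕ):ZMod 3)) = 1 by rw [cast3 (3*m+3) 0 (by omega)]; decide,
    show ((1:ZMod 3) - ((3*m+3+1:ℕ):ZMod 3)) = 0 by rw [cast3 (3*m+3+1) 1 (by omega)]; decide,
    show ((1:ZMod 3) - ((3*m+3+1+1:ℕ):ZMod 3)) = 2 by rw [cast3 (3*m+3+1+1) 2 (by omega)]; decide,
    show n+(3*(m+1)+2)-2*(3*m+3) = n-(3*m+1) by omega,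
    show n+(3*(m+1)+2)-2*(3*m+3+1) = n-(3*m+3) by omega,
    show n+(3*(m+1)+2)-2*(3*m+3+1+1) = n-(3*m+5) by omega]
  have hpre : (∑ t ∈ Finset.range (3*m+3), x (1 - (t:ZMod 3)) (n + (3*(m+1)+2) - 2*t))
      = ∑ t ∈ Finset.range (3*m+3), x (1 - (t:ZMod 3)) ((n+3) + (3*m+2) - 2*t) :=
    Finset.sum_congr rfl (fun t _ => by congr 1; omega)
  rw [hpre]; ring

lemma Ps3_succ (m n : ℕ) : Ps x (3*(m+1)+3) n
    = Ps x (3*m+3) (n+3) + (x 0 (n-(3*m+2)) + x 2 (n-(3*m+4)) + x 1 (n-(3*m+6))) := by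
  unfold Ps
  rw [show 3*(m+1)+3+1 = 3*m+4+1+1+1 by omega, Finset.sum_range_succ, Finset.sum_range_succ,
    Finset.sum_range_succ,
    show ((1:ZMod 3) - ((3*m+4:ℕ):ZMod 3)) = 0 by rw [cast3 (3*m+4) 1 (by omega)]; decide,
    show ((1:ZMod 3) - ((3*m+4+1:ℕ):ZMod 3)) = 2 by rw [cast3 (3*m+4+1) 2 (by omega)]; decide,
    show ((1:ZMod 3) - ((3*m+4+1+1:ℕ):ZMod 3)) = 1 by rw [cast3 (3*m+4+1+1) 0 (by omega)]; decide,
    show n+(3*(m+1)+3)-2*(3*m+4) = n-(3*m+2) by omega,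
    show n+(3*(m+1)+3)-2*(3*m+4+1) = n-(3*m+4) by omega,
    show n+(3*(m+1)+3)-2*(3*m+4+1+1) = n-(3*m+6) by omega]
  have hpre : (∑ t ∈ Finset.range (3*m+4), x (1 - (t:ZMod 3)) (n + (3*(m+1)+3) - 2*t))
      = ∑ t ∈ Finset.range (3*m+4), x (1 - (t:ZMod 3)) ((n+3) + (3*m+3) - 2*t) :=
    Finset.sum_congr rfl (fun t _ => by congr 1; omega)
  rw [hpre]; ring


section main
variable (hx : IsTubeSystem 3 x)
include hx

lemma T2 (m : ℕ) : ∀ n : ℕ, n % 3 = 1 → 3*m+4 ≤ n →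
    x 0 1 * As x m n = Ps x (3*m+2) n + Ps x (3*m) n := by
  induction m with
  | zero =>
    intro n hmod hn
    rw [show (3*0+2 : ℕ) = 2 by omega, show (3*0 : ℕ) = 0 by omega, As0, Ps20, Ps00]
    have e1 := mulII hx 1 0 (n+1) (n+2) n (by omega)
      (by rw [cast3 (n+1) 2 (by omega)]; decide) (by omega) (by omega)
    have e2 := mulIII hx 1 0 2 (n-1) n (n-2) (by omega) (by decide) (by decide)
      (by omega) (by omega)
    linear_combination e1 + e2
  | succ m ih =>
    intro n hmod hn
    have IH := ih (n+3) (by omega) (by omega)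
    rw [As_succ, Ps2_succ, Ps0_succ]
    have f1 := mulIII hx 1 0 2 (n-3*m) (n+1-3*m) (n-(3*m+1)) (by omega) (by decide) (by decide)
      (by omega) (by omega)
    have f2 := mulII hx 1 0 (n-(3*m+2)) (n-(3*m+1)) (n-(3*m+3)) (by omega)
      (by rw [cast3 (n-(3*m+2)) 2 (by omega)]; decide) (by omega) (by omega)
    have f3 := mulIII hx 1 0 2 (n-(3*m+4)) (n-(3*m+3)) (n-(3*m+5)) (by omega) (by decide)
      (by decide) (by omega) (by omega)
    linear_combination IH + f1 + f2 + f3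

lemma T3 (m : ℕ) : ∀ n : ℕ, n % 3 = 1 → 3*m+4 ≤ n →
    x 1 1 * Ps x (3*m+2) n = Ps x (3*m+3) n + As x m n := by
  induction m with
  | zero =>
    intro n hmod hn
    rw [show (3*0+2 : ℕ) = 2 by omega, show (3*0+3 : ℕ) = 3 by omega, Ps20, Ps30, As0]
    have e1 := mulII hx 1 1 (n+2) (n+3) (n+1) (by omega)
      (by rw [cast3 (n+2) 0 (by omega)]; decide) (by omega) (by omega)
    have e2 := mulII hx 0 1 n (n+1) (n-1) (by omega)
      (by rw [cast3 n 1 hmod]; decide) (by omega) (by omega)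
    have e3 := mulIII hx 2 1 0 (n-2) (n-1) (n-3) (by omega) (by decide) (by decide)
      (by omega) (by omega)
    have ex := exch hx 0 2 1 (n-2) (n-1) (n-3) (by omega) (by omega) (by decide) (by decide)
      (by omega) (by omega)
    linear_combination e1 + e2 + e3 + ex
  | succ m ih =>
    intro n hmod hn
    have IH := ih (n+3) (by omega) (by omega)
    rw [Ps2_succ, Ps3_succ, As_succ]
    have f1 := mulII hx 1 1 (n-(3*m+1)) (n-3*m) (n-(3*m+2)) (by omega)
      (by rw [cast3 (n-(3*m+1)) 0 (by omega)]; decide) (by omega) (by omega)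
    have f2 := mulII hx 0 1 (n-(3*m+3)) (n-(3*m+2)) (n-(3*m+4)) (by omega)
      (by rw [cast3 (n-(3*m+3)) 1 (by omega)]; decide) (by omega) (by omega)
    have f3 := mulIII hx 2 1 0 (n-(3*m+5)) (n-(3*m+4)) (n-(3*m+6)) (by omega) (by decide)
      (by decide) (by omega) (by omega)
    have ex := exch hx 0 2 1 (n-(3*m+5)) (n-(3*m+4)) (n-(3*m+6)) (by omega) (by omega)
      (by decide) (by decide) (by omega) (by omega)
    linear_combination IH + f1 + f2 + f3 + ex

lemma T4 (m : ℕ) : ∀ n : ℕ, n % 3 = 1 → 3*m+4 ≤ n →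
    x 2 1 * Ps x (3*m+3) n = As x (m+1) n + Ps x (3*m+2) n := by
  induction m with
  | zero =>
    intro n hmod hn
    rw [show (3*0+3 : ℕ) = 3 by omega, show (3*0+2 : ℕ) = 2 by omega,
      show (0+1 : ℕ) = 1 by omega, Ps30, Ps20, As1]
    have e1 := mulII hx 1 2 (n+3) (n+4) (n+2) (by omega)
      (by rw [cast3 (n+3) 1 (by omega)]; decide) (by omega) (by omega)
    have e2 := mulII hx 0 2 (n+1) (n+2) n (by omega)
      (by rw [cast3 (n+1) 2 (by omega)]; decide) (by omega) (by omega)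
    have e3 := mulII hx 2 2 (n-1) n (n-2) (by omega)
      (by rw [cast3 (n-1) 0 (by omega)]; decide) (by omega) (by omega)
    have e4 := mulII hx 1 2 (n-3) (n-2) (n-4) (by omega)
      (by rw [cast3 (n-3) 1 (by omega)]; decide) (by omega) (by omega)
    have ex := exch hx 1 0 2 (n+1) (n+2) n (by omega) (by omega) (by decide) (by decide)
      (by omega) (by omega)
    linear_combination e1 + e2 + e3 + e4 - ex
  | succ m ih =>
    intro n hmod hn
    have IH := ih (n+3) (by omega) (by omega)
    rw [Ps3_succ, As_succ (m+1), Ps2_succ,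
      show n-3*(m+1) = n-(3*m+3) by omega, show n-(3*(m+1)+2) = n-(3*m+5) by omega,
      show n-(3*(m+1)+4) = n-(3*m+7) by omega]
    have f1 := mulIII hx 0 2 1 (n-(3*m+2)) (n-(3*m+1)) (n-(3*m+3)) (by omega) (by decide)
      (by decide) (by omega) (by omega)
    have f2 := mulII hx 2 2 (n-(3*m+4)) (n-(3*m+3)) (n-(3*m+5)) (by omega)
      (by rw [cast3 (n-(3*m+4)) 0 (by omega)]; decide) (by omega) (by omega)
    have f3 := mulII hx 1 2 (n-(3*m+6)) (n-(3*m+5)) (n-(3*m+7)) (by omega)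
      (by rw [cast3 (n-(3*m+6)) 1 (by omega)]; decide) (by omega) (by omega)
    have ex := exch hx 2 1 0 (n-(3*m+2)) (n-(3*m+1)) (n-(3*m+3)) (by omega) (by omega)
      (by decide) (by decide) (by omega) (by omega)
    linear_combination IH + f1 + f2 + f3 + ex

lemma master (m : ℕ) : ∀ n : ℕ, n % 3 = 1 → 3*m+1 ≤ n →
    x 2 (3*m) * x 1 n = Ps x (3*m) n ∧ x 2 (3*m+1) * x 1 n = As x m n := by
  induction m with
  | zero =>
    intro n hmod hn
    constructor
    · rw [show (3*0 : ℕ) = 0 by omega, Ps00, hx.1 2, one_mul]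
    · rw [show (3*0+1 : ℕ) = 1 by omega, As0]
      exact mulII hx 1 2 n (n+1) (n-1) (by omega) (by rw [cast3 n 1 hmod]; decide) rfl rfl
  | succ m ih =>
    intro n hmod hn
    obtain ⟨z0, z1⟩ := ih n hmod (by omega)
    have ht2 := T2 hx m n hmod (by omega)
    have ht3 := T3 hx m n hmod (by omega)
    have ht4 := T4 hx m n hmod (by omega)
    have r2 := mulII hx 2 0 (3*m+1) (3*m+2) (3*m) (by omega)
      (by rw [cast3 (3*m+1) 1 (by omega)]; decide) (by omega) (by omega)
    have r3 := mulII hx 2 1 (3*m+2) (3*m+3) (3*m+1) (by omega)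
      (by rw [cast3 (3*m+2) 2 (by omega)]; decide) (by omega) (by omega)
    have r4 := mulII hx 2 2 (3*m+3) (3*m+4) (3*m+2) (by omega)
      (by rw [cast3 (3*m+3) 0 (by omega)]; decide) (by omega) (by omega)
    have s2 : x 2 (3*m+2) * x 1 n = Ps x (3*m+2) n := by
      linear_combination (-(x 1 n)) * r2 + x 0 1 * z1 + ht2 - z0
    have s3 : x 2 (3*m+3) * x 1 n = Ps x (3*m+3) n := by
      linear_combination (-(x 1 n)) * r3 + x 1 1 * s2 + ht3 - z1
    have s4 : x 2 (3*m+4) * x 1 n = As x (m+1) n := by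
      linear_combination (-(x 1 n)) * r4 + x 2 1 * s3 + ht4 - s2
    constructor
    · rw [show 3*(m+1) = 3*m+3 by omega]; exact s3
    · rw [show 3*(m+1)+1 = 3*m+4 by omega]; exact s4

end main
end TubeAux

/-- Corollary 7.3(1). -/
theorem tube_rank_three_cor_7_3_1 {R : Type*} [CommRing R]
    (x : ZMod 3 → ℕ → R) (hx : IsTubeSystem 3 x)
    (m n : ℕ) (hn : 3 * m + 1 ≤ n) (hmod : n % 3 = 1) :
    x 2 (3 * m + 1) * x 1 n
      = ∑ t ∈ Finset.range (3 * m + 2), x 1 (n + 3 * m + 1 - 2 * t) := by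
  obtain ⟨-, h⟩ := TubeAux.master hx m n hmod hn
  rw [h, TubeAux.As]
  exact Finset.sum_congr rfl (fun t _ => rfl)
end

section
/- Let x : ZMod 3 → ℕ → R be a tube system of rank 3 over a commutative ring R, and let m ≥ 0 and n ≥ 3m+2 be integers with n ≡ 1 (mod 3). Then x 2 (3m+2) · x 1 n = ∑_{t=0}^{3m+2} x 2 (n+3m+2−2t). (This is Corollary 7.3(2): for n ≡ 1 mod 3, X_{E_2[3m+2]} X_{E_1[n]} = X_{E_2[n+3m+2]} + X_{E_2[n+3m]} + X_{E_2[n+3m−2]} + ⋯ + X_{E_2[n−3m]} + X_{E_2[n−3m−2]}.) -/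
private lemma tube_aux3 {R : Type*} [CommRing R] (x : ZMod 3 → ℕ → R)
    (h0 : ∀ i, x i 0 = 1)
    (h2 : ∀ (i : ZMod 3) (N : ℕ), 1 ≤ N →
      x (i + (N : ZMod 3)) 1 * x i N = x i (N + 1) + x i (N - 1))
    (h3 : ∀ (i : ZMod 3) (N : ℕ), 1 ≤ N →
      x (i - 1) 1 * x i N = x (i - 1) (N + 1) + x (i + 1) (N - 1)) :
    ∀ k n : ℕ, k ≤ n → n % 3 = 1 →
      (k % 3 = 0 → x 2 k * x 1 n
        = x 1 (n + k) + ∑ t ∈ Finset.range k, x 0 (n + k - 2 * (t + 1))) ∧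
      (k % 3 = 1 → x 2 k * x 1 n = ∑ t ∈ Finset.range (k + 1), x 1 (n + k - 2 * t)) ∧
      (k % 3 = 2 → x 2 k * x 1 n = ∑ t ∈ Finset.range (k + 1), x 2 (n + k - 2 * t)) := by
  have relA : ∀ N, 1 ≤ N → x 0 1 * x 1 N = x 0 (N + 1) + x 2 (N - 1) := by
    intro N hN
    have h := h3 1 N hN
    rwa [show (1 - 1 : ZMod 3) = 0 from by decide, show (1 + 1 : ZMod 3) = 2 from by decide] at h
  have relB : ∀ N, 1 ≤ N → x 1 1 * x 2 N = x 1 (N + 1) + x 0 (N - 1) := by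
    intro N hN
    have h := h3 2 N hN
    rwa [show (2 - 1 : ZMod 3) = 1 from by decide, show (2 + 1 : ZMod 3) = 0 from by decide] at h
  have relC : ∀ N, 1 ≤ N → x 2 1 * x 0 N = x 2 (N + 1) + x 1 (N - 1) := by
    intro N hN
    have h := h3 0 N hN
    rwa [show (0 - 1 : ZMod 3) = 2 from by decide, show (0 + 1 : ZMod 3) = 1 from by decide] at h
  have relCB : ∀ N, 1 ≤ N → N % 3 = 1 → x 2 1 * x 1 N = x 1 (N + 1) + x 1 (N - 1) := by
    intro N hN hN3
    have h := h2 1 N hN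
    rwa [show ((N : ℕ) : ZMod 3) = 1 from by rw [← ZMod.natCast_mod, hN3]; norm_num,
      show (1 + 1 : ZMod 3) = 2 from by decide] at h
  have relCA : ∀ N, 1 ≤ N → N % 3 = 2 →
      x 0 (N + 1) + x 0 (N - 1) = x 2 (N + 1) + x 1 (N - 1) := by
    intro N hN hN3
    have h := h2 0 N hN
    rw [show ((N : ℕ) : ZMod 3) = 2 from by rw [← ZMod.natCast_mod, hN3]; norm_num,
      show (0 + 2 : ZMod 3) = 2 from by decide] at h
    have h' := relC N hN
    linear_combination h' - h
  intro k
  induction k using Nat.strong_induction_on with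
  | _ k IH =>
    intro n hkn hn
    rcases Nat.lt_or_ge k 2 with hk | hk
    · interval_cases k
      · refine ⟨fun _ => ?_, fun h => by omega, fun h => by omega⟩
        rw [h0, one_mul, Finset.sum_range_zero, add_zero, Nat.add_zero]
      · refine ⟨fun h => by omega, fun _ => ?_, fun h => by omega⟩
        rw [Finset.sum_range_succ, Finset.sum_range_succ, Finset.sum_range_zero, zero_add,
          show n + 1 - 2 * 0 = n + 1 from by omega, show n + 1 - 2 * 1 = n - 1 from by omega]
        exact relCB n (by omega) hn
    · obtain ⟨j, rfl⟩ : ∃ j, k = j + 2 := ⟨k - 2, by omega⟩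
      have hj3 : j % 3 = 0 ∨ j % 3 = 1 ∨ j % 3 = 2 := by omega
      rcases hj3 with hj | hj | hj
      · -- j ≡ 0 : target (j+2) ≡ 2, multiplier A1 = x 0 1
        refine ⟨fun h => by omega, fun h => by omega, fun _ => ?_⟩
        have IH1 := ((IH (j + 1) (by omega)) n (by omega) hn).2.1 (by omega)
        have IH0 := ((IH j (by omega)) n (by omega) hn).1 hj
        have hcast : ((j + 1 : ℕ) : ZMod 3) = 1 := by
          rw [← ZMod.natCast_mod, show (j + 1) % 3 = 1 from by omega]; norm_num
        have hmul : x 0 1 * (x 2 (j + 1) * x 1 n)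
            = x 2 (j + 2) * x 1 n + x 2 j * x 1 n := by
          have h := h2 2 (j + 1) (by omega)
          rw [hcast, show (2 + 1 : ZMod 3) = 0 from by decide,
            show j + 1 + 1 = j + 2 from by omega, show j + 1 - 1 = j from by omega] at h
          linear_combination (x 1 n) * h
        have key : x 0 1 * (x 2 (j + 1) * x 1 n)
            = ∑ t ∈ Finset.range (j + 2), x 0 (n + j + 2 - 2 * t)
              + ∑ t ∈ Finset.range (j + 2), x 2 (n + j - 2 * t) := by
          rw [IH1, Finset.mul_sum, ← Finset.sum_add_distrib]
          refine Finset.sum_congr rfl fun t ht => ?_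
          have htj := Finset.mem_range.mp ht
          have h := relA (n + j + 1 - 2 * t) (by omega)
          rw [show n + (j + 1) - 2 * t = n + j + 1 - 2 * t from by omega, h,
            show n + j + 1 - 2 * t + 1 = n + j + 2 - 2 * t from by omega,
            show n + j + 1 - 2 * t - 1 = n + j - 2 * t from by omega]
        have hS0 : ∑ t ∈ Finset.range (j + 2), x 0 (n + j + 2 - 2 * t)
            = x 0 (n + j + 2) + x 0 (n + j)
              + ∑ t ∈ Finset.range j, x 0 (n + j - 2 * (t + 1)) := by
          rw [Finset.sum_range_succ', Finset.sum_range_succ']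
          have e : ∑ t ∈ Finset.range j, x 0 (n + j + 2 - 2 * (t + 1 + 1))
              = ∑ t ∈ Finset.range j, x 0 (n + j - 2 * (t + 1)) := by
            refine Finset.sum_congr rfl fun t ht => ?_
            have htj := Finset.mem_range.mp ht
            congr 1; omega
          rw [e, show n + j + 2 - 2 * (0 + 1) = n + j from by omega,
            show n + j + 2 - 2 * 0 = n + j + 2 from by omega]
          ring
        have hCA : x 0 (n + j + 2) + x 0 (n + j) = x 2 (n + j + 2) + x 1 (n + j) := by
          have h := relCA (n + j + 1) (by omega) (by omega)
          rwa [show n + j + 1 + 1 = n + j + 2 from by omega,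
            show n + j + 1 - 1 = n + j from by omega] at h
        have hT : ∑ t ∈ Finset.range (j + 2 + 1), x 2 (n + (j + 2) - 2 * t)
            = x 2 (n + j + 2) + ∑ t ∈ Finset.range (j + 2), x 2 (n + j - 2 * t) := by
          rw [Finset.sum_range_succ']
          have e : ∑ t ∈ Finset.range (j + 2), x 2 (n + (j + 2) - 2 * (t + 1))
              = ∑ t ∈ Finset.range (j + 2), x 2 (n + j - 2 * t) := by
            refine Finset.sum_congr rfl fun t ht => ?_
            have htj := Finset.mem_range.mp ht
            congr 1; omega
          rw [e, show n + (j + 2) - 2 * 0 = n + j + 2 from by omega]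
          ring
        rw [hT]
        linear_combination key + hS0 - hmul - IH0 + hCA
      · -- j ≡ 1 : target (j+2) ≡ 0, multiplier B1 = x 1 1
        refine ⟨fun _ => ?_, fun h => by omega, fun h => by omega⟩
        have IH1 := ((IH (j + 1) (by omega)) n (by omega) hn).2.2 (by omega)
        have IH0 := ((IH j (by omega)) n (by omega) hn).2.1 hj
        have hcast : ((j + 1 : ℕ) : ZMod 3) = 2 := by
          rw [← ZMod.natCast_mod, show (j + 1) % 3 = 2 from by omega]; norm_num
        have hmul : x 1 1 * (x 2 (j + 1) * x 1 n)
            = x 2 (j + 2) * x 1 n + x 2 j * x 1 n := by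
          have h := h2 2 (j + 1) (by omega)
          rw [hcast, show (2 + 2 : ZMod 3) = 1 from by decide,
            show j + 1 + 1 = j + 2 from by omega, show j + 1 - 1 = j from by omega] at h
          linear_combination (x 1 n) * h
        have key : x 1 1 * (x 2 (j + 1) * x 1 n)
            = ∑ t ∈ Finset.range (j + 2), x 1 (n + j + 2 - 2 * t)
              + ∑ t ∈ Finset.range (j + 2), x 0 (n + j - 2 * t) := by
          rw [IH1, Finset.mul_sum, ← Finset.sum_add_distrib]
          refine Finset.sum_congr rfl fun t ht => ?_
          have htj := Finset.mem_range.mp ht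
          have h := relB (n + j + 1 - 2 * t) (by omega)
          rw [show n + (j + 1) - 2 * t = n + j + 1 - 2 * t from by omega, h,
            show n + j + 1 - 2 * t + 1 = n + j + 2 - 2 * t from by omega,
            show n + j + 1 - 2 * t - 1 = n + j - 2 * t from by omega]
        have hS1 : ∑ t ∈ Finset.range (j + 2), x 1 (n + j + 2 - 2 * t)
            = x 1 (n + j + 2) + ∑ t ∈ Finset.range (j + 1), x 1 (n + j - 2 * t) := by
          rw [Finset.sum_range_succ']
          have e : ∑ t ∈ Finset.range (j + 1), x 1 (n + j + 2 - 2 * (t + 1))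
              = ∑ t ∈ Finset.range (j + 1), x 1 (n + j - 2 * t) := by
            refine Finset.sum_congr rfl fun t ht => ?_
            have htj := Finset.mem_range.mp ht
            congr 1; omega
          rw [e, show n + j + 2 - 2 * 0 = n + j + 2 from by omega]
          ring
        have hT : x 1 (n + (j + 2)) + ∑ t ∈ Finset.range (j + 2), x 0 (n + (j + 2) - 2 * (t + 1))
            = x 1 (n + j + 2) + ∑ t ∈ Finset.range (j + 2), x 0 (n + j - 2 * t) := by
          have e : ∑ t ∈ Finset.range (j + 2), x 0 (n + (j + 2) - 2 * (t + 1))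
              = ∑ t ∈ Finset.range (j + 2), x 0 (n + j - 2 * t) := by
            refine Finset.sum_congr rfl fun t ht => ?_
            have htj := Finset.mem_range.mp ht
            congr 1; omega
          rw [e, show n + (j + 2) = n + j + 2 from by omega]
        rw [hT]
        linear_combination key + hS1 - hmul - IH0
      · -- j ≡ 2 : target (j+2) ≡ 1, multiplier C1 = x 2 1
        refine ⟨fun h => by omega, fun _ => ?_, fun h => by omega⟩
        have IH1 := ((IH (j + 1) (by omega)) n (by omega) hn).1 (by omega)
        have IH0 := ((IH j (by omega)) n (by omega) hn).2.2 hj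
        have hcast : ((j + 1 : ℕ) : ZMod 3) = 0 := by
          rw [← ZMod.natCast_mod, show (j + 1) % 3 = 0 from by omega]; norm_num
        have hmul : x 2 1 * (x 2 (j + 1) * x 1 n)
            = x 2 (j + 2) * x 1 n + x 2 j * x 1 n := by
          have h := h2 2 (j + 1) (by omega)
          rw [hcast, show (2 + 0 : ZMod 3) = 2 from by decide,
            show j + 1 + 1 = j + 2 from by omega, show j + 1 - 1 = j from by omega] at h
          linear_combination (x 1 n) * h
        have e1 : x 2 1 * x 1 (n + j + 1) = x 1 (n + j + 2) + x 1 (n + j) := by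
          have h := relCB (n + j + 1) (by omega) (by omega)
          rwa [show n + j + 1 + 1 = n + j + 2 from by omega,
            show n + j + 1 - 1 = n + j from by omega] at h
        have key : x 2 1 * (x 2 (j + 1) * x 1 n)
            = (x 1 (n + j + 2) + x 1 (n + j))
              + (∑ t ∈ Finset.range (j + 1), x 2 (n + j - 2 * t)
                + ∑ t ∈ Finset.range (j + 1), x 1 (n + j - 2 - 2 * t)) := by
          rw [IH1, mul_add, Finset.mul_sum, ← Finset.sum_add_distrib,
            show n + (j + 1) = n + j + 1 from by omega]
          rw [e1]
          congr 1
          refine Finset.sum_congr rfl fun t ht => ?_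
          have htj := Finset.mem_range.mp ht
          have h := relC (n + j - 1 - 2 * t) (by omega)
          rw [show n + j + 1 - 2 * (t + 1) = n + j - 1 - 2 * t from by omega, h,
            show n + j - 1 - 2 * t + 1 = n + j - 2 * t from by omega,
            show n + j - 1 - 2 * t - 1 = n + j - 2 - 2 * t from by omega]
        have hT : ∑ t ∈ Finset.range (j + 2 + 1), x 1 (n + (j + 2) - 2 * t)
            = x 1 (n + j + 2) + x 1 (n + j)
              + ∑ t ∈ Finset.range (j + 1), x 1 (n + j - 2 - 2 * t) := by
          rw [Finset.sum_range_succ', Finset.sum_range_succ']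
          have e : ∑ t ∈ Finset.range (j + 1), x 1 (n + (j + 2) - 2 * (t + 1 + 1))
              = ∑ t ∈ Finset.range (j + 1), x 1 (n + j - 2 - 2 * t) := by
            refine Finset.sum_congr rfl fun t ht => ?_
            have htj := Finset.mem_range.mp ht
            congr 1; omega
          rw [e, show n + (j + 2) - 2 * (0 + 1) = n + j from by omega,
            show n + (j + 2) - 2 * 0 = n + j + 2 from by omega]
          ring
        rw [hT]
        linear_combination key - hmul - IH0

/-- Corollary 7.3(2). -/
theorem tube_rank_three_cor_7_3_2 {R : Type*} [CommRing R]
    (x : ZMod 3 → ℕ → R) (hx : IsTubeSystem 3 x)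
    (m n : ℕ) (hn : 3 * m + 2 ≤ n) (hmod : n % 3 = 1) :
    x 2 (3 * m + 2) * x 1 n
      = ∑ t ∈ Finset.range (3 * m + 3), x 2 (n + 3 * m + 2 - 2 * t) := by
  obtain ⟨h0, h2, h3⟩ := hx
  have h := (tube_aux3 x h0 h2 h3 (3 * m + 2) n (by omega) hmod).2.2 (by omega)
  rw [h, show 3 * m + 2 + 1 = 3 * m + 3 from by omega]
  refine Finset.sum_congr rfl fun t ht => ?_
  have htj := Finset.mem_range.mp ht
  congr 1
end

section
/- Let x : ZMod 3 → ℕ → R be a tube system of rank 3 over a commutative ring R, and let m ≥ 0 and n ≥ 3m+1 be integers. Then x 1 (3m+1) · x 1 n = ∑_{t=0}^{2m} c_t, where c_t = x 1 1 · x 1 (n+3m−3t) if t is even and c_t = x 1 (n+3m−3t) if t is odd. (This is Proposition 7.4(1): X_{E_1[3m+1]} X_{E_1[n]} = X_{E_1} X_{E_1[n+3m]} + X_{E_1[n+3m−3]} + X_{E_1} X_{E_1[n+3m−6]} + X_{E_1[n+3m−9]} + ⋯ + X_{E_1} X_{E_1[n−3m+6]} + X_{E_1[n−3m+3]} + X_{E_1}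 X_{E_1[n−3m]}.) -/
namespace TubeAux

variable {R : Type*} [CommRing R]

/-- The sum appearing on the right-hand side of Prop 7.4(1). -/
def S3 (x : ZMod 3 → ℕ → R) (m n : ℕ) : R :=
  ∑ t ∈ Finset.range (2 * m + 1),
      if Even t then x 1 1 * x 1 (n + 3 * m - 3 * t)
      else x 1 (n + 3 * m - 3 * t)

lemma cast3_s10 (N : ℕ) : ((N + 3 : ℕ) : ZMod 3) = (N : ZMod 3) := by
  rw [Nat.cast_add, ZMod.natCast_self, add_zero]

lemma castval (k j : ℕ) : ((3 * k + j : ℕ) : ZMod 3) = ((j : ℕ) : ZMod 3) := by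
  rw [Nat.cast_add, Nat.cast_mul, ZMod.natCast_self, zero_mul, zero_add]

variable (x : ZMod 3 → ℕ → R)

/-- The basic recurrence for the sequence `x 1 ·`. -/
lemma tube_rec
    (hB : ∀ (i : ZMod 3) (N : ℕ), 1 ≤ N →
      x (i + (N : ZMod 3)) 1 * x i N = x i (N + 1) + x i (N - 1)) (N : ℕ) :
    x (((N + 2 : ℕ) : ZMod 3)) 1 * x 1 (N + 1) = x 1 (N + 2) + x 1 N := by
  have h := hB 1 (N + 1) (by omega)
  have e : (1 : ZMod 3) + ((N + 1 : ℕ) : ZMod 3) = ((N + 2 : ℕ) : ZMod 3) := by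
    push_cast; ring
  rw [e] at h
  simpa using h

/-- Three-step (period) recurrence with constant coefficient. -/
lemma tube_T
    (hB : ∀ (i : ZMod 3) (N : ℕ), 1 ≤ N →
      x (i + (N : ZMod 3)) 1 * x i N = x i (N + 1) + x i (N - 1)) (N : ℕ) :
    x 1 (N + 6)
      = (x 0 1 * x 1 1 * x 2 1 - x 0 1 - x 1 1 - x 2 1) * x 1 (N + 3) - x 1 N := by
  have h1 := tube_rec x hB N
  have h2 := tube_rec x hB (N + 1)
  have h3 := tube_rec x hB (N + 2)
  have h4 := tube_rec x hB (N + 3)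
  have h5 := tube_rec x hB (N + 4)
  rw [show N + 1 + 1 = N + 2 by ring, show N + 1 + 2 = N + 3 by ring] at h2
  rw [show N + 2 + 1 = N + 3 by ring, show N + 2 + 2 = N + 4 by ring] at h3
  rw [show N + 3 + 1 = N + 4 by ring, show N + 3 + 2 = N + 5 by ring] at h4
  rw [show N + 4 + 1 = N + 5 by ring, show N + 4 + 2 = N + 6 by ring] at h5
  rw [show ((N + 5 : ℕ) : ZMod 3) = ((N + 2 : ℕ) : ZMod 3) by
    rw [show N + 5 = N + 2 + 3 by ring, cast3_s10]] at h4
  rw [show ((N + 6 : ℕ) : ZMod 3) = ((N + 3 : ℕ) : ZMod 3) by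
    rw [show N + 6 = N + 3 + 3 by ring, cast3_s10]] at h5
  -- now coefficients are x ↑(N+2) (in h1, h4), x ↑(N+3) (in h2, h5), x ↑(N+4) (in h3)
  obtain ⟨k, hk | hk | hk⟩ : ∃ k, N = 3 * k ∨ N = 3 * k + 1 ∨ N = 3 * k + 2 :=
    ⟨N / 3, by omega⟩ <;> subst hk
  · rw [show ((3 * k + 2 : ℕ) : ZMod 3) = 2 by
      rw [castval k 2]; decide] at h1 h4
    rw [show ((3 * k + 3 : ℕ) : ZMod 3) = 0 by
      rw [castval k 3]; decide] at h2 h5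
    rw [show ((3 * k + 4 : ℕ) : ZMod 3) = 1 by
      rw [castval k 4]; decide] at h3
    linear_combination (-1 : R) * h1 - x 2 1 * h2 + (1 - x 2 1 * x 0 1) * h3
      - x 0 1 * h4 - h5
  · rw [show ((3 * k + 1 + 2 : ℕ) : ZMod 3) = 0 by
      rw [show 3 * k + 1 + 2 = 3 * k + 3 by ring, castval k 3]; decide] at h1 h4
    rw [show ((3 * k + 1 + 3 : ℕ) : ZMod 3) = 1 by
      rw [show 3 * k + 1 + 3 = 3 * k + 4 by ring, castval k 4]; decide] at h2 h5
    rw [show ((3 * k + 1 + 4 : ℕ) : ZMod 3) = 2 by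
      rw [show 3 * k + 1 + 4 = 3 * k + 5 by ring, castval k 5]; decide] at h3
    linear_combination (-1 : R) * h1 - x 0 1 * h2 + (1 - x 0 1 * x 1 1) * h3
      - x 1 1 * h4 - h5
  · rw [show ((3 * k + 2 + 2 : ℕ) : ZMod 3) = 1 by
      rw [show 3 * k + 2 + 2 = 3 * k + 4 by ring, castval k 4]; decide] at h1 h4
    rw [show ((3 * k + 2 + 3 : ℕ) : ZMod 3) = 2 by
      rw [show 3 * k + 2 + 3 = 3 * k + 5 by ring, castval k 5]; decide] at h2 h5
    rw [show ((3 * k + 2 + 4 : ℕ) : ZMod 3) = 0 by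
      rw [show 3 * k + 2 + 4 = 3 * k + 6 by ring, castval k 6]; decide] at h3
    linear_combination (-1 : R) * h1 - x 1 1 * h2 + (1 - x 1 1 * x 2 1) * h3
      - x 2 1 * h4 - h5

/-- Peeling the two bottom terms off the sum. -/
lemma S3_peel (m n : ℕ) :
    S3 x (m + 1) n
      = S3 x m (n + 3) + x 1 (n - 3 * m) + x 1 1 * x 1 (n - 3 * m - 3) := by
  unfold S3
  rw [show 2 * (m + 1) + 1 = (2 * m + 1) + 1 + 1 by ring, Finset.sum_range_succ,
    Finset.sum_range_succ]
  congr 1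
  · congr 1
    · refine Finset.sum_congr rfl fun t ht => ?_
      rw [show n + 3 * (m + 1) - 3 * t = n + 3 + 3 * m - 3 * t by omega]
    · rw [if_neg (by simp [Nat.even_add_one, Nat.not_even_iff_odd] : ¬ Even (2 * m + 1)),
        show n + 3 * (m + 1) - 3 * (2 * m + 1) = n - 3 * m by omega]
  · rw [if_pos (by simp [Nat.even_add_one, Nat.not_even_iff_odd] : Even (2 * m + 1 + 1)),
      show n + 3 * (m + 1) - 3 * (2 * m + 1 + 1) = n - 3 * m - 3 by omega]

/-- Multiplying the sum by the constant `T` shifts the argument by `±3`. -/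
lemma S3_T (hB : ∀ (i : ZMod 3) (N : ℕ), 1 ≤ N →
      x (i + (N : ZMod 3)) 1 * x i N = x i (N + 1) + x i (N - 1))
    (m n : ℕ) (h : 3 * m + 4 ≤ n) :
    (x 0 1 * x 1 1 * x 2 1 - x 0 1 - x 1 1 - x 2 1) * S3 x m n
      = S3 x m (n + 3) + S3 x m (n - 3) := by
  unfold S3
  rw [Finset.mul_sum, ← Finset.sum_add_distrib]
  refine Finset.sum_congr rfl fun t ht => ?_
  rw [Finset.mem_range] at ht
  have e1 : n + 3 * m - 3 * t = (n - 3 + 3 * m - 3 * t) + 3 := by omega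
  have e2 : n + 3 + 3 * m - 3 * t = (n - 3 + 3 * m - 3 * t) + 6 := by omega
  have hT := tube_T x hB (n - 3 + 3 * m - 3 * t)
  by_cases he : Even t
  · rw [if_pos he, if_pos he, if_pos he, e1, e2]
    linear_combination (-(x 1 1)) * hT
  · rw [if_neg he, if_neg he, if_neg he, e1, e2]
    linear_combination (-1 : R) * hT

/-- The case `m = 1`. -/
lemma tube_m1 (h0 : ∀ i, x i 0 = 1)
    (hB : ∀ (i : ZMod 3) (N : ℕ), 1 ≤ N →
      x (i + (N : ZMod 3)) 1 * x i N = x i (N + 1) + x i (N - 1)) :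
    ∀ n, 4 ≤ n →
      x 1 4 * x 1 n = x 1 1 * x 1 (n + 3) + x 1 n + x 1 1 * x 1 (n - 3) := by
  have r := tube_rec x hB
  have r0 := r 0
  have r1 := r 1
  have r2 := r 2
  have r3 := r 3
  have r4 := r 4
  have r5 := r 5
  have r6 := r 6
  rw [show ((0 + 2 : ℕ) : ZMod 3) = 2 by decide] at r0
  rw [show ((1 + 2 : ℕ) : ZMod 3) = 0 by decide] at r1
  rw [show ((2 + 2 : ℕ) : ZMod 3) = 1 by decide] at r2
  rw [show ((3 + 2 : ℕ) : ZMod 3) = 2 by decide] at r3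
  rw [show ((4 + 2 : ℕ) : ZMod 3) = 0 by decide] at r4
  rw [show ((5 + 2 : ℕ) : ZMod 3) = 1 by decide] at r5
  rw [show ((6 + 2 : ℕ) : ZMod 3) = 2 by decide] at r6
  norm_num at r0 r1 r2 r3 r4 r5 r6
  rw [h0 1] at r0
  have e2 : x 1 2 = x 2 1 * x 1 1 - 1 := by linear_combination -r0
  have e3 : x 1 3 = x 0 1 * (x 2 1 * x 1 1 - 1) - x 1 1 := by
    linear_combination x 0 1 * e2 - r1
  have e4 : x 1 4 = x 1 1 * (x 0 1 * (x 2 1 * x 1 1 - 1) - x 1 1)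
      - (x 2 1 * x 1 1 - 1) := by
    linear_combination x 1 1 * e3 - r2 - e2
  have e5 : x 1 5 = x 2 1 * (x 1 1 * (x 0 1 * (x 2 1 * x 1 1 - 1) - x 1 1)
      - (x 2 1 * x 1 1 - 1)) - (x 0 1 * (x 2 1 * x 1 1 - 1) - x 1 1) := by
    linear_combination x 2 1 * e4 - r3 - e3
  have e6 : x 1 6 = x 0 1 * (x 2 1 * (x 1 1 * (x 0 1 * (x 2 1 * x 1 1 - 1) - x 1 1)
      - (x 2 1 * x 1 1 - 1)) - (x 0 1 * (x 2 1 * x 1 1 - 1) - x 1 1))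
      - (x 1 1 * (x 0 1 * (x 2 1 * x 1 1 - 1) - x 1 1) - (x 2 1 * x 1 1 - 1)) := by
    linear_combination x 0 1 * e5 - r4 - e4
  have e7 : x 1 7 = x 1 1 * (x 0 1 * (x 2 1 * (x 1 1 * (x 0 1 * (x 2 1 * x 1 1 - 1)
      - x 1 1) - (x 2 1 * x 1 1 - 1)) - (x 0 1 * (x 2 1 * x 1 1 - 1) - x 1 1))
      - (x 1 1 * (x 0 1 * (x 2 1 * x 1 1 - 1) - x 1 1) - (x 2 1 * x 1 1 - 1)))
      - (x 2 1 * (x 1 1 * (x 0 1 * (x 2 1 * x 1 1 - 1) - x 1 1)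
      - (x 2 1 * x 1 1 - 1)) - (x 0 1 * (x 2 1 * x 1 1 - 1) - x 1 1)) := by
    linear_combination x 1 1 * e6 - r5 - e5
  have e8 : x 1 8 = x 2 1 * (x 1 1 * (x 0 1 * (x 2 1 * (x 1 1 * (x 0 1
      * (x 2 1 * x 1 1 - 1) - x 1 1) - (x 2 1 * x 1 1 - 1))
      - (x 0 1 * (x 2 1 * x 1 1 - 1) - x 1 1))
      - (x 1 1 * (x 0 1 * (x 2 1 * x 1 1 - 1) - x 1 1) - (x 2 1 * x 1 1 - 1)))
      - (x 2 1 * (x 1 1 * (x 0 1 * (x 2 1 * x 1 1 - 1) - x 1 1)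
      - (x 2 1 * x 1 1 - 1)) - (x 0 1 * (x 2 1 * x 1 1 - 1) - x 1 1)))
      - (x 0 1 * (x 2 1 * (x 1 1 * (x 0 1 * (x 2 1 * x 1 1 - 1) - x 1 1)
      - (x 2 1 * x 1 1 - 1)) - (x 0 1 * (x 2 1 * x 1 1 - 1) - x 1 1))
      - (x 1 1 * (x 0 1 * (x 2 1 * x 1 1 - 1) - x 1 1) - (x 2 1 * x 1 1 - 1))) := by
    linear_combination x 2 1 * e7 - r6 - e6
  intro n
  induction n using Nat.strong_induction_on with
  | _ n ihn =>
    intro hn4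
    by_cases hc4 : n = 4
    · subst hc4
      rw [show (4 : ℕ) + 3 = 7 by norm_num, show (4 : ℕ) - 3 = 1 by norm_num]
      rw [e4, e7]
      ring
    by_cases hc5 : n = 5
    · subst hc5
      rw [show (5 : ℕ) + 3 = 8 by norm_num, show (5 : ℕ) - 3 = 2 by norm_num]
      rw [e4, e5, e8, e2]
      ring
    obtain ⟨k, rfl⟩ : ∃ k, n = k + 6 := ⟨n - 6, by omega⟩
    have g1 := ihn (k + 5) (by omega) (by omega)
    have g2 := ihn (k + 4) (by omega) (by omega)
    rw [show k + 5 + 3 = k + 8 by ring, show k + 5 - 3 = k + 2 by omega] at g1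
    rw [show k + 4 + 3 = k + 7 by ring, show k + 4 - 3 = k + 1 by omega] at g2
    have h6 := r (k + 4)
    have h9 := r (k + 7)
    have h3' := r (k + 1)
    rw [show k + 4 + 1 = k + 5 by ring, show k + 4 + 2 = k + 6 by ring] at h6
    rw [show k + 7 + 1 = k + 8 by ring, show k + 7 + 2 = k + 9 by ring] at h9
    rw [show k + 1 + 1 = k + 2 by ring, show k + 1 + 2 = k + 3 by ring] at h3'
    rw [show ((k + 6 : ℕ) : ZMod 3) = ((k + 3 : ℕ) : ZMod 3) by
      rw [show k + 6 = k + 3 + 3 by ring, cast3_s10]] at h6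
    rw [show ((k + 9 : ℕ) : ZMod 3) = ((k + 3 : ℕ) : ZMod 3) by
      rw [show k + 9 = k + 3 + 3 + 3 by ring, cast3_s10, cast3_s10]] at h9
    rw [show k + 6 + 3 = k + 9 by ring, show k + 6 - 3 = k + 3 by omega]
    linear_combination (x (((k + 3 : ℕ) : ZMod 3)) 1) * g1 - g2
      + (1 - x 1 4) * h6 + x 1 1 * h9 + x 1 1 * h3'

/-- Main lemma: Prop 7.4(1) in terms of `S3`. -/
lemma tube_main (h0 : ∀ i, x i 0 = 1)
    (hB : ∀ (i : ZMod 3) (N : ℕ), 1 ≤ N →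
      x (i + (N : ZMod 3)) 1 * x i N = x i (N + 1) + x i (N - 1)) :
    ∀ m n, 3 * m + 1 ≤ n → x 1 (3 * m + 1) * x 1 n = S3 x m n := by
  intro m
  induction m using Nat.strong_induction_on with
  | _ m ih =>
    intro n hn
    rcases m with _ | _ | k
    · simp [S3]
    · have key := tube_m1 x h0 hB n (by omega)
      unfold S3
      norm_num [Finset.sum_range_succ]
      rw [show n + 3 - 6 = n - 3 by omega]
      linear_combination key
    · have ih1 := ih (k + 1) (by omega) n (by omega)
      have ih0 := ih k (by omega) n (by omega)
      have tt := S3_T x hB (k + 1) n (by omega)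
      have p1 := S3_peel x (k + 1) n
      have p2 := S3_peel x k (n - 3)
      rw [show n - 3 + 3 = n by omega] at p2
      rw [show n - 3 - 3 * k = n - 3 * (k + 1) by omega] at p2
      have tl := tube_T x hB (3 * k + 1)
      rw [show 3 * k + 1 + 6 = 3 * (k + 1 + 1) + 1 by ring,
        show 3 * k + 1 + 3 = 3 * (k + 1) + 1 by ring] at tl
      linear_combination (x 1 n) * tl
        + (x 0 1 * x 1 1 * x 2 1 - x 0 1 - x 1 1 - x 2 1) * ih1 - ih0 + tt - p1 + p2

end TubeAux

/-- Proposition 7.4(1). -/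
theorem tube_rank_three_prop_7_4_1 {R : Type*} [CommRing R]
    (x : ZMod 3 → ℕ → R) (hx : IsTubeSystem 3 x)
    (m n : ℕ) (hn : 3 * m + 1 ≤ n) :
    x 1 (3 * m + 1) * x 1 n
      = ∑ t ∈ Finset.range (2 * m + 1),
          if Even t then x 1 1 * x 1 (n + 3 * m - 3 * t)
          else x 1 (n + 3 * m - 3 * t) := by
  have H := TubeAux.tube_main x hx.1 hx.2.1 m n hn
  unfold TubeAux.S3 at H
  exact H
end

section
/- Let x : ZMod 3 → ℕ → R be a tube system of rank 3 over a commutative ring R, and let m ≥ 0 and n ≥ 3m+2 be integers. Then x 1 (3m+2) · x 1 n = x 1 2 · ( ∑_{s=0}^{m} x 1 (n+3m−6s) ). (This is Proposition 7.4(2): X_{E_1[3m+2]} X_{E_1[n]} = X_{E_1[2]} ( X_{E_1[n+3m]} + X_{E_1[n+3m−6]} + ⋯ + X_{E_1[n−3m]} ).) -/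
set_option linter.unusedSectionVars false

section TubeAux

variable {R : Type*} [CommRing R] (x : ZMod 3 → ℕ → R)

def uu : ℕ → R
  | 0 => -1
  | 1 => 0
  | (k+2) => x ((k : ℕ) : ZMod 3) 1 * uu (k+1) - uu k

def zz : R := x 0 1 * x 1 1 * x 2 1 - x 0 1 - x 1 1 - x 2 1

lemma cast3 (k : ℕ) : x (((k+3 : ℕ) : ZMod 3)) 1 = x ((k : ℕ) : ZMod 3) 1 := by
  congr 1
  push_cast
  rw [show ((3:ZMod 3)) = 0 by decide, add_zero]

lemma zk (k : ℕ) :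
    x ((k:ℕ):ZMod 3) 1 * x ((k+1:ℕ):ZMod 3) 1 * x ((k+2:ℕ):ZMod 3) 1
      - x ((k:ℕ):ZMod 3) 1 - x ((k+1:ℕ):ZMod 3) 1 - x ((k+2:ℕ):ZMod 3) 1 = zz x := by
  induction k with
  | zero => norm_num [zz]
  | succ k ih =>
    rw [show k+1+1 = k+2 from rfl, show k+1+2 = k+3 from rfl, cast3 x k]
    linear_combination ih

lemma rec3 (k : ℕ) : uu x (k+6) = zz x * uu x (k+3) - uu x k := by
  have s0 : uu x (k+2) = x ((k:ℕ):ZMod 3) 1 * uu x (k+1) - uu x k := rfl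
  have s1 : uu x (k+3) = x ((k+1:ℕ):ZMod 3) 1 * uu x (k+2) - uu x (k+1) := rfl
  have s2 : uu x (k+4) = x ((k+2:ℕ):ZMod 3) 1 * uu x (k+3) - uu x (k+2) := rfl
  have s3 : uu x (k+5) = x ((k+3:ℕ):ZMod 3) 1 * uu x (k+4) - uu x (k+3) := rfl
  have s4 : uu x (k+6) = x ((k+4:ℕ):ZMod 3) 1 * uu x (k+5) - uu x (k+4) := rfl
  have c4 : x ((k+4:ℕ):ZMod 3) 1 = x ((k+1:ℕ):ZMod 3) 1 := by
    rw [show k+4 = k+1+3 from rfl, cast3 x (k+1)]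
  rw [c4] at s4
  rw [cast3 x k] at s3
  rw [← zk x k, s4, s3, s2, s1, s0]
  ring

lemma W_id (t j : ℕ) :
    uu x (3*t+4) * uu x (j+3*t) = uu x (3*t+1) * uu x (j+3*t+3) + uu x 4 * uu x j := by
  induction t with
  | zero =>
    norm_num [show uu x 1 = (0:R) from rfl]
  | succ t ih =>
    have h1 := rec3 x (3*t+1)
    have h2 := rec3 x (j+3*t)
    rw [show 3*t+1+3 = 3*t+4 by omega] at h1
    rw [show 3*(t+1)+4 = 3*t+1+6 by ring, show j+3*(t+1)+3 = j+3*t+6 by ring,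
        show 3*(t+1)+1 = 3*t+4 by ring, show j+3*(t+1) = j+3*t+3 by ring,
        h1, h2]
    linear_combination ih

lemma key (m n : ℕ) (hn : 3*m+2 ≤ n) :
    uu x (3*m+4) * uu x (n+2)
      = uu x 4 * ∑ s ∈ Finset.range (m+1), uu x (n + 3*m - 6*s + 2) := by
  induction m generalizing n with
  | zero => norm_num
  | succ m ih =>
    obtain ⟨j, rfl⟩ : ∃ j, n = j + 3*m + 1 := ⟨n - (3*m+1), by omega⟩
    rw [Finset.sum_range_succ]
    have hlast : j + 3*m + 1 + 3*(m+1) - 6*(m+1) + 2 = j := by omega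
    have hsum : ∑ s ∈ Finset.range (m+1), uu x (j + 3*m + 1 + 3*(m+1) - 6*s + 2)
        = ∑ s ∈ Finset.range (m+1), uu x (j + 3*m + 4 + 3*m - 6*s + 2) := by
      refine Finset.sum_congr rfl fun s hs => ?_
      rw [Finset.mem_range] at hs
      congr 1
      omega
    have hw := W_id x (m+1) j
    rw [show j+3*(m+1)+3 = j+3*m+4+2 by ring, show 3*(m+1)+1 = 3*m+4 by ring,
        show j+3*(m+1) = j+3*m+1+2 by ring] at hw
    have hih := ih (j+3*m+4) (by omega)
    rw [hlast, hsum]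
    linear_combination hw + hih

lemma x_eq (hx : (∀ i, x i 0 = 1) ∧
    (∀ (i : ZMod 3) (N : ℕ), 1 ≤ N →
      x (i + (N : ZMod 3)) 1 * x i N = x i (N + 1) + x i (N - 1)) ∧
    (∀ (i : ZMod 3) (N : ℕ), 1 ≤ N →
      x (i - 1) 1 * x i N = x (i - 1) (N + 1) + x (i + 1) (N - 1))) :
    ∀ k, x 1 k = uu x (k+2) := by
  intro k
  induction k using Nat.twoStepInduction with
  | zero =>
    have s : uu x 2 = x ((0:ℕ):ZMod 3) 1 * uu x 1 - uu x 0 := rfl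
    rw [s, show uu x 1 = (0:R) from rfl, show uu x 0 = (-1:R) from rfl, hx.1]
    ring
  | one =>
    have s : uu x 3 = x ((1:ℕ):ZMod 3) 1 * uu x 2 - uu x 1 := rfl
    have s2 : uu x 2 = x ((0:ℕ):ZMod 3) 1 * uu x 1 - uu x 0 := rfl
    rw [s, s2, show uu x 1 = (0:R) from rfl, show uu x 0 = (-1:R) from rfl]
    push_cast
    ring
  | more k ih1 ih2 =>
    have s : uu x (k+2+2) = x ((k+2:ℕ):ZMod 3) 1 * uu x (k+3) - uu x (k+2) := rfl
    have hA := hx.2.1 1 (k+1) (by omega)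
    rw [show (1 + ((k+1:ℕ):ZMod 3)) = ((k+2:ℕ):ZMod 3) by push_cast; ring,
        show k+1+1 = k+2 from rfl, show k+1-1 = k from rfl] at hA
    rw [show k+1+2 = k+3 from rfl] at ih2
    rw [s, ← ih2, ← ih1]
    linear_combination -hA

end TubeAux


/-- Proposition 7.4(2). -/
theorem tube_rank_three_prop_7_4_2 {R : Type*} [CommRing R]
    (x : ZMod 3 → ℕ → R) (hx : IsTubeSystem 3 x)
    (m n : ℕ) (hn : 3 * m + 2 ≤ n) :
    x 1 (3 * m + 2) * x 1 n
      = x 1 2 * ∑ s ∈ Finset.range (m + 1), x 1 (n + 3 * m - 6 * s) := by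
  simp only [x_eq x hx]
  exact key x m n hn
end

section
/- Let x : ZMod 3 → ℕ → R be a tube system of rank 3 over a commutative ring R, and let m ≥ 0 and n ≥ 3m+3 be integers. Then x 1 (3m+3) · x 1 n = ∑_{t=0}^{2m+2} c_t, where c_t = x 1 (n+3m+3−3t) if t is even and c_t = x 2 1 · x 1 (n+3m+3−3t) if t is odd. (This is Proposition 7.4(3): X_{E_1[3m+3]} X_{E_1[n]} = X_{E_1[n+3m+3]} + X_{E_2} X_{E_1[n+3m]} + X_{E_1[n+3m−3]} + X_{E_2} X_{E_1[n+3m−6]} + ⋯ + X_{E_1[n−3m+3]} + X_{E_2} X_{E_1[n−3m]} + X_{E_1[n−3m−3]}.) -/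
/-- Base case: `X_{E_1[3]} X_{E_1[n]} = X_{E_1[n+3]} + X_{E_2} X_{E_1[n]} + X_{E_1[n-3]}`. -/
theorem tube_L_s12 {R : Type*} [CommRing R] (x : ZMod 3 → ℕ → R) (hx : IsTubeSystem 3 x) (k : ℕ) :
    x 1 3 * x 1 (k + 3) = x 1 (k + 6) + x 2 1 * x 1 (k + 3) + x 1 k := by
  obtain ⟨h0, hA, -⟩ := hx
  have E1 : ∀ z : ZMod 3, 1 + (z + 1) = 2 + z := by decide
  have E2 : ∀ z : ZMod 3, 1 + (z + 2) = z := by decide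
  have E3 : ∀ z : ZMod 3, 1 + (z + 3) = 1 + z := by decide
  have E4 : ∀ z : ZMod 3, 1 + (z + 4) = 2 + z := by decide
  have E5 : ∀ z : ZMod 3, 1 + (z + 5) = z := by decide
  have hzcases : ∀ z : ZMod 3, z = 0 ∨ z = 1 ∨ z = 2 := by decide
  have hP : ∀ z : ZMod 3, x z 1 * (x (1+z) 1 * x (2+z) 1) = x 0 1 * (x 1 1 * x 2 1) := by
    intro z
    rcases hzcases z with rfl | rfl | rfl <;>
      simp only [add_zero, show (1+1:ZMod 3)=2 from by decide, show (2+1:ZMod 3)=0 from by decide,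
        show (1+2:ZMod 3)=0 from by decide, show (2+2:ZMod 3)=1 from by decide] <;> ring
  have hS : ∀ z : ZMod 3, x z 1 + x (1+z) 1 + x (2+z) 1 = x 0 1 + x 1 1 + x 2 1 := by
    intro z
    rcases hzcases z with rfl | rfl | rfl <;>
      simp only [add_zero, show (1+1:ZMod 3)=2 from by decide, show (2+1:ZMod 3)=0 from by decide,
        show (1+2:ZMod 3)=0 from by decide, show (2+2:ZMod 3)=1 from by decide] <;> ring
  have hB1 := hA 1 1 le_rfl
  have hB2 := hA 1 2 (by omega)
  norm_num at hB1 hB2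
  rw [show ((3:ZMod 3)) = 0 from by decide] at hB2
  have h1 := hA 1 (k+3) (by omega)
  have h2 := hA 1 (k+4) (by omega)
  have h3 := hA 1 (k+5) (by omega)
  have h4 := hA 1 (k+2) (by omega)
  have h5 := hA 1 (k+1) (by omega)
  push_cast at h1 h2 h3 h4 h5
  simp only [E1, E2, E3, E4, E5] at h1 h2 h3 h4 h5
  simp only [show k+3+1 = k+4 by omega, show k+3-1 = k+2 by omega,
    show k+4+1 = k+5 by omega, show k+4-1 = k+3 by omega,
    show k+5+1 = k+6 by omega, show k+5-1 = k+4 by omega,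
    show k+2+1 = k+3 by omega, show k+2-1 = k+1 by omega,
    show k+1+1 = k+2 by omega, show k+1-1 = k by omega] at h1 h2 h3 h4 h5
  linear_combination (-(x 1 (k+3))) * hB2 - (x 1 (k+3) * x 0 1) * hB1
    - (x 1 (k+3) * x 0 1) * (h0 1) - (x 1 (k+3)) * hP (k : ZMod 3) + (x 1 (k+3)) * hS (k : ZMod 3)
    + (x (k : ZMod 3) 1 * x (2+(k : ZMod 3)) 1 - 1) * h1 + (x (k : ZMod 3) 1) * h2 + h3
    + (x (2+(k : ZMod 3)) 1) * h4 + h5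

/-- General multiplication formula, in subtraction-free form. -/
theorem tube_P {R : Type*} [CommRing R] (x : ZMod 3 → ℕ → R) (hx : IsTubeSystem 3 x) :
    ∀ m k, x 1 (3*m) * x 1 (k + 3*m)
      = ∑ t ∈ Finset.range (2*m+1), (if Even t then 1 else x 2 1) * x 1 (k + 3*t) := by
  intro m
  induction m using Nat.twoStepInduction with
  | zero => intro k; simp [hx.1 1]
  | one =>
      intro k
      have hL := tube_L_s12 x hx k
      simp only [Finset.sum_range_succ, Finset.sum_range_zero]
      norm_num
      linear_combination hL
  | more m ih ih1 =>
      intro k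
      have hL0 := tube_L_s12 x hx (3*m)
      have h1 := ih1 (k+3)
      rw [show 3*(m+1) = 3*m+3 by ring, show k+3+(3*m+3) = k+(3*m+6) by ring,
        show 2*(m+1)+1 = 2*m+3 by ring] at h1
      simp only [show ∀ t, k+3+3*t = k+3*t+3 from fun t => by ring] at h1
      have h2 := ih (k+6)
      rw [show k+6+3*m = k+(3*m+6) by ring] at h2
      simp only [show ∀ t, k+6+3*t = k+3*t+6 from fun t => by ring] at h2
      have hx13 : x 1 3 * (∑ t ∈ Finset.range (2*m+3), (if Even t then 1 else x 2 1) * x 1 (k+3*t+3))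
          = (∑ t ∈ Finset.range (2*m+3), (if Even t then 1 else x 2 1) * x 1 (k+3*t+6))
            + x 2 1 * (∑ t ∈ Finset.range (2*m+3), (if Even t then 1 else x 2 1) * x 1 (k+3*t+3))
            + (∑ t ∈ Finset.range (2*m+3), (if Even t then 1 else x 2 1) * x 1 (k+3*t)) := by
        rw [Finset.mul_sum, Finset.mul_sum, ← Finset.sum_add_distrib, ← Finset.sum_add_distrib]
        refine Finset.sum_congr rfl fun t _ => ?_
        linear_combination (if Even t then (1:R) else x 2 1) * tube_L_s12 x hx (k+3*t)
      have p1 : (∑ t ∈ Finset.range (2*m+3), (if Even t then 1 else x 2 1) * x 1 (k+3*t+6))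
          = (∑ t ∈ Finset.range (2*m+1), (if Even t then 1 else x 2 1) * x 1 (k+3*t+6))
            + x 2 1 * x 1 (k+3*(2*m+3)) + x 1 (k+3*(2*m+4)) := by
        rw [Finset.sum_range_succ, Finset.sum_range_succ,
          show k+3*(2*m+1)+6 = k+3*(2*m+3) by ring, show k+3*(2*m+2)+6 = k+3*(2*m+4) by ring]
        simp [Nat.even_add_one, parity_simps]
      rw [show 3*(m+2) = 3*m+6 by ring, show 2*(m+2)+1 = 2*m+5 by ring]
      rw [Finset.sum_range_succ, Finset.sum_range_succ]
      have e1 : ¬ Even (2*m+3) := by simp [Nat.even_add_one, parity_simps]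
      have e2 : Even (2*m+4) := by simp [parity_simps]
      rw [if_neg e1, if_pos e2, one_mul]
      linear_combination (-(x 1 (k+(3*m+6)))) * hL0 + (x 1 3 - x 2 1) * h1 - h2 + hx13 + p1

/-- Proposition 7.4(3). -/
theorem tube_rank_three_prop_7_4_3 {R : Type*} [CommRing R]
    (x : ZMod 3 → ℕ → R) (hx : IsTubeSystem 3 x)
    (m n : ℕ) (hn : 3 * m + 3 ≤ n) :
    x 1 (3 * m + 3) * x 1 n
      = ∑ t ∈ Finset.range (2 * m + 3),
          if Even t then x 1 (n + 3 * m + 3 - 3 * t)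
          else x 2 1 * x 1 (n + 3 * m + 3 - 3 * t) := by
  obtain ⟨k, rfl⟩ : ∃ k, n = k + (3*m+3) := ⟨n - (3*m+3), by omega⟩
  have h := tube_P x hx (m+1) k
  rw [show 3*(m+1) = 3*m+3 by ring, show 2*(m+1)+1 = 2*m+3 by ring] at h
  rw [h]
  calc (∑ t ∈ Finset.range (2*m+3), (if Even t then 1 else x 2 1) * x 1 (k + 3*t))
      = ∑ t ∈ Finset.range (2*m+3),
          (if Even (2*m+3-1-t) then x 1 (k+(3*m+3) + 3*m + 3 - 3*(2*m+3-1-t))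
            else x 2 1 * x 1 (k+(3*m+3) + 3*m + 3 - 3*(2*m+3-1-t))) := by
        refine Finset.sum_congr rfl fun t ht => ?_
        simp only [Finset.mem_range] at ht
        rw [show 2*m+3-1-t = 2*m+2-t by omega,
          show k+(3*m+3) + 3*m + 3 - 3*(2*m+2-t) = k + 3*t by omega]
        have hEv : Even (2*m+2-t) ↔ Even t := by
          rw [Nat.even_sub (by omega), Nat.even_iff, Nat.even_iff]; omega
        simp only [hEv]
        split <;> ring
    _ = _ := Finset.sum_range_reflect
        (fun t => if Even t then x 1 (k+(3*m+3) + 3*m + 3 - 3*t)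
          else x 2 1 * x 1 (k+(3*m+3) + 3*m + 3 - 3*t)) (2*m+3)
end
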